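/- arXiv:1804.05637 — 3 statements merged into one kernel-verified Lean document; each statement's English description precedes it below -/
import Mathlib

section
/- Let (X, Y) be a 2-separation of a connected matroid M and let N be a 3-connected minor of M. Then at least one of X and Y, say U, satisfies |U ∩ E(N)| ≤ 1; moreover, for any u ∈ U, if M/u is connected then M/u has an N-minor, and if M\u is connected then M\u has an N-minor. -/
open Set Matroid

variable {α β : Type*}

namespace NDP

/-- The rank of a set `X` in a matroid `M`: the largest cardinality of an
independent subset of `X` (intended for finite matroids). -/
noncomputable def rk (M : Matroid α) (X : Set α) : ℕ :=
  sSup {n : ℕ | ∃ I, M.Indep I ∧ I ⊆ X ∧ I.ncard = n}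

/-- The connectivity function `λ_M(X) = r(X) + r(E − X) − r(M)`, valued in `ℤ`. -/
noncomputable def lam (M : Matroid α) (X : Set α) : ℤ :=
  (rk M X : ℤ) + (rk M (M.E \ X) : ℤ) - (rk M M.E : ℤ)

/-- Deletion of a set of elements. -/
def delete (M : Matroid α) (D : Set α) : Matroid α := M ↾ (M.E \ D)

/-- Contraction of a set of elements, defined by duality. -/
def contract (M : Matroid α) (C : Set α) : Matroid α := (delete M✶ C)✶

/-- `X` is a `k`-separating set of `M`. -/
def Separating (M : Matroid α) (k : ℕ) (X : Set α) : Prop :=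
  X ⊆ M.E ∧ lam M X ≤ (k : ℤ) - 1

/-- `X` is exactly `k`-separating in `M`. -/
def ExactlySeparating (M : Matroid α) (k : ℕ) (X : Set α) : Prop :=
  X ⊆ M.E ∧ lam M X = (k : ℤ) - 1

/-- `(X, M.E \ X)` is a `k`-separation of `M`. -/
def IsKSeparation (M : Matroid α) (k : ℕ) (X : Set α) : Prop :=
  Separating M k X ∧ k ≤ X.ncard ∧ k ≤ (M.E \ X).ncard

/-- A matroid is connected if it has no 1-separations. -/
def Connected (M : Matroid α) : Prop := ∀ X, ¬ IsKSeparation M 1 X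

/-- A matroid is 3-connected if it has no k-separations for k < 3. -/
def ThreeConnected (M : Matroid α) : Prop := ∀ k < 3, ∀ X, ¬ IsKSeparation M k X

/-- A circuit: a minimal dependent set. -/
def Circuit (M : Matroid α) (C : Set α) : Prop :=
  C ⊆ M.E ∧ ¬ M.Indep C ∧ ∀ D, D ⊂ C → M.Indep D

def Cocircuit (M : Matroid α) (C : Set α) : Prop := Circuit M✶ C

def Triangle (M : Matroid α) (T : Set α) : Prop := Circuit M T ∧ T.ncard = 3

def Triad (M : Matroid α) (T : Set α) : Prop := Cocircuit M T ∧ T.ncard = 3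

/-- `N` is a minor of `M`. -/
def Minor (N M : Matroid α) : Prop := ∃ C D, N = delete (contract M C) D

/-- `M` has a minor isomorphic to `N`. -/
def IsoMinor (M : Matroid α) (N : Matroid β) : Prop :=
  ∃ (f : β → α) (hf : Set.InjOn f N.E), Minor (N.map f hf) M

/-- `X` is a set of representatives for the simplification of `M`:
one non-loop element from each parallel class. -/
def SimpRep (M : Matroid α) (X : Set α) : Prop :=
  X ⊆ M.E ∧ (∀ e ∈ X, M.Indep {e}) ∧
  (∀ e ∈ M.E, M.Indep {e} → ∃ f ∈ X, f ∈ M.closure {e}) ∧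
  (∀ f ∈ X, ∀ g ∈ X, f ∈ M.closure {g} → f = g)

/-- `si M` (the simplification of `M`) is a 3-connected matroid. -/
def SiThreeConnected (M : Matroid α) : Prop :=
  ∀ X, SimpRep M X → ThreeConnected (M ↾ X)

/-- `co M` (the cosimplification of `M`) is a 3-connected matroid. -/
def CoThreeConnected (M : Matroid α) : Prop := SiThreeConnected M✶

/-- The restriction of `M` to `P` is isomorphic to the rank-`r` uniform matroid on `P`. -/
def UnifRestr (M : Matroid α) (r : ℕ) (P : Set α) : Prop :=
  P ⊆ M.E ∧ ∀ X ⊆ P, (M.Indep X ↔ X.ncard ≤ r)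

/-- A set is fully closed if it is closed in `M` and in `M✶`. -/
def FullClosed (M : Matroid α) (F : Set α) : Prop :=
  M.closure F = F ∧ M✶.closure F = F

/-- The full closure of `X`: the intersection of all fully closed sets containing `X`. -/
def fcl (M : Matroid α) (X : Set α) : Set α :=
  ⋂₀ {F | X ⊆ F ∧ FullClosed M F}

/-- `(X, {z}, Y)` is a vertical 3-separation of `M`. -/
def VertThreeSep (M : Matroid α) (X : Set α) (z : α) (Y : Set α) : Prop :=
  X ∪ {z} ∪ Y = M.E ∧ Disjoint X Y ∧ z ∉ X ∧ z ∉ Y ∧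
  IsKSeparation M 3 (X ∪ {z}) ∧ 3 ≤ rk M (X ∪ {z}) ∧ 3 ≤ rk M Y ∧
  IsKSeparation M 3 X ∧ 3 ≤ rk M X ∧ 3 ≤ rk M (Y ∪ {z}) ∧
  z ∈ M.closure X ∧ z ∈ M.closure Y

/-- `M` is a wheel or a whirl: its ground set has a cyclic ordering of alternating
spokes and rims in which consecutive triples are alternately triangles and triads. -/
def IsWheelOrWhirl (M : Matroid α) : Prop :=
  ∃ (n : ℕ) (s r : ZMod n → α), 2 ≤ n ∧
    Function.Injective (fun p : ZMod n × Bool => if p.2 then s p.1 else r p.1) ∧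
    Set.range s ∪ Set.range r = M.E ∧
    ∀ i : ZMod n, Triangle M {s i, r i, s (i + 1)} ∧ Triad M {r i, s (i + 1), r (i + 1)}

/-- `f` (restricted to `{0, …, k−1}`) is a fan ordering of length `k` in `M`. -/
def IsFanOrd (M : Matroid α) (k : ℕ) (f : ℕ → α) : Prop :=
  3 ≤ k ∧ Set.InjOn f (Set.Iio k) ∧ (∀ i < k, f i ∈ M.E) ∧
  (Triangle M {f 0, f 1, f 2} ∨ Triad M {f 0, f 1, f 2}) ∧
  ∀ i, i + 3 < k →
    (Triangle M {f i, f (i+1), f (i+2)} → Triad M {f (i+1), f (i+2), f (i+3)}) ∧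
    (Triad M {f i, f (i+1), f (i+2)} → Triangle M {f (i+1), f (i+2), f (i+3)})

/-- `F` is a fan of `M`. -/
def IsFan (M : Matroid α) (F : Set α) : Prop :=
  ∃ k f, IsFanOrd M k f ∧ F = f '' Set.Iio k

/-- `F` is a maximal fan of `M`. -/
def IsMaximalFan (M : Matroid α) (F : Set α) : Prop :=
  IsFan M F ∧ ∀ F', IsFan M F' → F ⊆ F' → F' = F

end NDP


namespace NDP

variable {α : Type*} {M : Matroid α}

open Set Matroid

/-! ### Basic rank lemmas -/

lemma rk_set_nonempty (M : Matroid α) (X : Set α) :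
    {n : ℕ | ∃ I, M.Indep I ∧ I ⊆ X ∧ I.ncard = n}.Nonempty :=
  ⟨0, ∅, M.empty_indep, empty_subset _, ncard_empty _⟩

lemma rk_set_bddAbove (M : Matroid α) [M.Finite] (X : Set α) :
    BddAbove {n : ℕ | ∃ I, M.Indep I ∧ I ⊆ X ∧ I.ncard = n} := by
  refine ⟨M.E.ncard, ?_⟩
  rintro n ⟨I, hI, -, rfl⟩
  exact ncard_le_ncard hI.subset_ground M.ground_finite

lemma ncard_le_rk [M.Finite] {I X : Set α} (hI : M.Indep I) (hIX : I ⊆ X) :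
    I.ncard ≤ rk M X :=
  le_csSup (rk_set_bddAbove M X) ⟨I, hI, hIX, rfl⟩

lemma rk_le_of_forall [M.Finite] {X : Set α} {n : ℕ}
    (h : ∀ I, M.Indep I → I ⊆ X → I.ncard ≤ n) : rk M X ≤ n := by
  refine csSup_le (rk_set_nonempty M X) ?_
  rintro m ⟨I, hI, hIX, rfl⟩
  exact h I hI hIX

lemma rk_eq_ncard_of_basis [M.Finite] {I X : Set α} (hI : M.IsBasis I (X ∩ M.E)) :
    rk M X = I.ncard := by
  refine le_antisymm (rk_le_of_forall ?_) (ncard_le_rk hI.indep (hI.subset.trans inter_subset_left))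
  intro J hJ hJX
  obtain ⟨K, hK, hJK⟩ := hJ.subset_isBasis_of_subset (subset_inter hJX hJ.subset_ground)
  have hcard : K.encard = I.encard := hK.encard_eq_encard hI
  have hKfin : K.Finite := M.ground_finite.subset hK.indep.subset_ground
  have hIfin : I.Finite := M.ground_finite.subset hI.indep.subset_ground
  calc J.ncard ≤ K.ncard := ncard_le_ncard hJK hKfin
    _ = I.ncard := by rw [ncard_def, ncard_def, hcard]

lemma exists_rk_basis (M : Matroid α) [M.Finite] (X : Set α) :
    ∃ I, M.IsBasis I (X ∩ M.E) ∧ rk M X = I.ncard := by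
  obtain ⟨I, hI⟩ := M.exists_isBasis (X ∩ M.E) inter_subset_right
  exact ⟨I, hI, rk_eq_ncard_of_basis hI⟩

lemma rk_inter_ground (M : Matroid α) [M.Finite] (X : Set α) :
    rk M (X ∩ M.E) = rk M X := by
  obtain ⟨I, hI, hrk⟩ := exists_rk_basis M X
  rw [hrk]
  have h2 : M.IsBasis I ((X ∩ M.E) ∩ M.E) := by rwa [inter_assoc, inter_self]
  exact rk_eq_ncard_of_basis h2

lemma rk_mono [M.Finite] {X Y : Set α} (hXY : X ⊆ Y) : rk M X ≤ rk M Y := by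
  refine rk_le_of_forall fun I hI hIX => ncard_le_rk hI (hIX.trans hXY)

lemma rk_eq_of_indep [M.Finite] {I : Set α} (hI : M.Indep I) : rk M I = I.ncard := by
  refine le_antisymm (rk_le_of_forall fun J hJ hJI => ?_) (ncard_le_rk hI Subset.rfl)
  exact ncard_le_ncard hJI (M.ground_finite.subset hI.subset_ground)

lemma rk_empty (M : Matroid α) [M.Finite] : rk M (∅ : Set α) = 0 := by
  simpa using rk_eq_of_indep (M := M) M.empty_indep

lemma indep_iff_rk [M.Finite] {I : Set α} :
    M.Indep I ↔ I ⊆ M.E ∧ rk M I = I.ncard := by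
  refine ⟨fun h => ⟨h.subset_ground, rk_eq_of_indep h⟩, fun ⟨hIE, h⟩ => ?_⟩
  obtain ⟨J, hJ, hrk⟩ := exists_rk_basis M I
  rw [inter_eq_self_of_subset_left hIE] at hJ
  have hIfin : I.Finite := M.ground_finite.subset hIE
  have hJI : J = I := eq_of_subset_of_ncard_le hJ.subset (by omega) hIfin
  rw [← hJI]; exact hJ.indep

lemma rk_le_ncard [M.Finite] {X : Set α} (hX : X ⊆ M.E) : rk M X ≤ X.ncard :=
  rk_le_of_forall fun I _ hIX => ncard_le_ncard hIX (M.ground_finite.subset hX)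

lemma rk_ground_le_of_subset [M.Finite] {X : Set α} : rk M X ≤ rk M M.E :=
  le_trans (by rw [rk_inter_ground]) (rk_mono inter_subset_right)

/-- Submodularity of the rank function. -/
lemma rk_submod (M : Matroid α) [M.Finite] (A B : Set α) :
    rk M (A ∪ B) + rk M (A ∩ B) ≤ rk M A + rk M B := by
  -- reduce to subsets of the ground set
  wlog hAE : A ⊆ M.E ∧ B ⊆ M.E with H
  · have h := H M (A ∩ M.E) (B ∩ M.E) ⟨inter_subset_right, inter_subset_right⟩
    rw [show A ∩ M.E ∪ B ∩ M.E = (A ∪ B) ∩ M.E from (union_inter_distrib_right A B M.E).symm] at h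
    rw [show A ∩ M.E ∩ (B ∩ M.E) = (A ∩ B) ∩ M.E by rw [inter_inter_inter_comm, inter_self]] at h
    rw [rk_inter_ground, rk_inter_ground, rk_inter_ground, rk_inter_ground] at h
    exact h
  obtain ⟨hA, hB⟩ := hAE
  obtain ⟨I, hI⟩ := M.exists_isBasis (A ∩ B) ((inter_subset_left).trans hA)
  obtain ⟨J, hJ, hIJ⟩ := hI.indep.subset_isBasis_of_subset
    (hI.subset.trans (inter_subset_left.trans subset_union_left)) (union_subset hA hB)
  have hJfin : J.Finite := M.ground_finite.subset hJ.indep.subset_ground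
  have hrAB : rk M (A ∪ B) = J.ncard :=
    rk_eq_ncard_of_basis (by rwa [inter_eq_self_of_subset_left (union_subset hA hB)])
  have hrI : rk M (A ∩ B) = I.ncard :=
    rk_eq_ncard_of_basis (by rwa [inter_eq_self_of_subset_left ((inter_subset_left).trans hA)])
  have hJA : (J ∩ A).ncard ≤ rk M A := ncard_le_rk (hJ.indep.subset inter_subset_left)
    inter_subset_right
  have hJB : (J ∩ B).ncard ≤ rk M B := ncard_le_rk (hJ.indep.subset inter_subset_left)
    inter_subset_right
  have hsplit : (J ∩ A).ncard + (J ∩ B).ncard = J.ncard + (J ∩ (A ∩ B)).ncard := by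
    rw [← ncard_union_add_ncard_inter _ _ (hJfin.subset inter_subset_left)
      (hJfin.subset inter_subset_left), ← inter_union_distrib_left,
      inter_eq_self_of_subset_left hJ.subset, ← inter_inter_distrib_left]
  have hIJcap : I.ncard ≤ (J ∩ (A ∩ B)).ncard :=
    ncard_le_ncard (subset_inter hIJ hI.subset) (hJfin.subset inter_subset_left)
  omega

/-- Diminishing returns. -/
lemma rk_diminishing (M : Matroid α) [M.Finite] {A B : Set α} (C : Set α) (hAB : A ⊆ B) :
    rk M (B ∪ C) + rk M A ≤ rk M (A ∪ C) + rk M B := by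
  have h := rk_submod M B (A ∪ C)
  rw [show B ∪ (A ∪ C) = B ∪ C by rw [← union_assoc, union_eq_self_of_subset_right hAB]] at h
  have h2 : rk M A ≤ rk M (B ∩ (A ∪ C)) := rk_mono (subset_inter hAB subset_union_left)
  omega

lemma rk_insert_le (M : Matroid α) [M.Finite] (X : Set α) (e : α) :
    rk M (insert e X) ≤ rk M X + 1 := by
  obtain ⟨I, hI, hrk⟩ := exists_rk_basis M (insert e X)
  rw [hrk]
  have hIX : I \ {e} ⊆ X := by
    intro x hx
    have := hI.subset hx.1
    rcases this.1 with h | h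
    · exact absurd h hx.2
    · exact h
  have := ncard_le_rk (hI.indep.subset diff_subset) hIX
  have hfin : I.Finite := M.ground_finite.subset hI.indep.subset_ground
  have hcard : I.ncard ≤ (I \ {e}).ncard + 1 := by
    rcases em (e ∈ I) with h | h
    · rw [ncard_diff_singleton_add_one h hfin]
    · rw [diff_singleton_eq_self h]; omega
  omega

lemma rk_union_singleton_le (M : Matroid α) [M.Finite] (X : Set α) (e : α) :
    rk M (X ∪ {e}) ≤ rk M X + 1 := by
  rw [union_singleton]; exact rk_insert_le M X e

end NDP
namespace NDP

variable {α : Type*} {M : Matroid α}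

open Set Matroid

lemma rk_eq_ncard_of_basis' [M.Finite] {I X : Set α} (hI : M.IsBasis I X) (hX : X ⊆ M.E) :
    rk M X = I.ncard :=
  rk_eq_ncard_of_basis (by rwa [inter_eq_self_of_subset_left hX])

lemma rk_ground_eq_ncard_base [M.Finite] {B : Set α} (hB : M.IsBase B) :
    rk M M.E = B.ncard :=
  rk_eq_ncard_of_basis' (isBasis_ground_iff.mpr hB) Subset.rfl

/-- The rank formula for the dual matroid. -/
lemma rk_dual_add (M : Matroid α) [M.Finite] {A : Set α} (hA : A ⊆ M.E) :
    rk M✶ A + rk M M.E = A.ncard + rk M (M.E \ A) := by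
  have hEfin := M.ground_finite
  obtain ⟨I, hI⟩ := M.exists_isBasis (M.E \ A) diff_subset
  obtain ⟨B, hB, hIB⟩ := hI.indep.exists_isBase_superset
  have hBfin : B.Finite := hEfin.subset hB.subset_ground
  have hrE : rk M M.E = B.ncard := rk_ground_eq_ncard_base hB
  have hrEA : rk M (M.E \ A) = I.ncard := rk_eq_ncard_of_basis' hI diff_subset
  -- lower bound
  have h1 : (B ∩ (M.E \ A)).ncard ≤ I.ncard := by
    rw [← hrEA]
    exact ncard_le_rk (hB.indep.subset inter_subset_left) inter_subset_right
  have h1' : I.ncard ≤ (B ∩ (M.E \ A)).ncard :=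
    ncard_le_ncard (subset_inter hIB hI.subset) (hBfin.subset inter_subset_left)
  have h2 : (A \ B).ncard ≤ rk M✶ A := by
    refine ncard_le_rk ?_ diff_subset
    rw [dual_indep_iff_exists' ]
    exact ⟨diff_subset.trans hA, B, hB, disjoint_sdiff_left⟩
  have h3 : (A \ B).ncard + (A ∩ B).ncard = A.ncard := by
    rw [← ncard_union_eq (disjoint_of_subset_right inter_subset_right disjoint_sdiff_left)
      ((hEfin.subset hA).subset diff_subset) ((hEfin.subset hA).subset inter_subset_left),
      diff_union_inter]
  have h4 : (A ∩ B).ncard + (B ∩ (M.E \ A)).ncard = B.ncard := by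
    have hdisj : Disjoint (A ∩ B) (B ∩ (M.E \ A)) :=
      Set.disjoint_left.mpr fun x hx hx2 => hx2.2.2 hx.1
    rw [← ncard_union_eq hdisj (hBfin.subset inter_subset_right) (hBfin.subset inter_subset_left)]
    congr 1
    rw [inter_comm A B]
    ext x; simp only [mem_union, mem_inter_iff, mem_diff]
    constructor
    · rintro (⟨h, _⟩ | ⟨h, _⟩) <;> exact h
    · intro hx
      rcases em (x ∈ A) with h | h
      · exact Or.inl ⟨hx, h⟩
      · exact Or.inr ⟨hx, hB.subset_ground hx, h⟩
  -- upper bound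
  haveI : M✶.Finite := inferInstance
  obtain ⟨J, hJ⟩ := M✶.exists_isBasis A (by rwa [dual_ground])
  have hrdA : rk M✶ A = J.ncard := rk_eq_ncard_of_basis' hJ (by rwa [dual_ground])
  obtain ⟨hJE, B', hB', hJB'⟩ := (dual_indep_iff_exists').mp hJ.indep
  have hB'fin : B'.Finite := hEfin.subset hB'.subset_ground
  have h5 : (B' \ A).ncard ≤ rk M (M.E \ A) := by
    refine ncard_le_rk (hB'.indep.subset diff_subset) ?_
    exact diff_subset_diff_left hB'.subset_ground
  have h6 : (B' ∩ A).ncard + (B' \ A).ncard = B'.ncard := by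
    have hdisj : Disjoint (B' ∩ A) (B' \ A) :=
      Set.disjoint_left.mpr fun x hx hx2 => hx2.2 hx.2
    rw [← ncard_union_eq hdisj (hB'fin.subset inter_subset_left) (hB'fin.subset diff_subset),
      inter_union_diff]
  have h7 : (B' ∩ A).ncard + J.ncard ≤ A.ncard := by
    have hdisj : Disjoint (B' ∩ A) J :=
      (disjoint_of_subset_left inter_subset_left hJB'.symm)
    have := ncard_union_eq hdisj (hB'fin.subset inter_subset_left)
      (hEfin.subset (hJ.subset.trans hA))
    have hle : ((B' ∩ A) ∪ J).ncard ≤ A.ncard :=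
      ncard_le_ncard (union_subset inter_subset_right hJ.subset) (hEfin.subset hA)
    omega
  have h8 : rk M M.E = B'.ncard := rk_ground_eq_ncard_base hB'
  omega

/-- rank of a restriction. -/
lemma rk_restrict (M : Matroid α) (R A : Set α) : rk (M ↾ R) A = rk M (A ∩ R) := by
  unfold rk
  congr 1
  ext n
  constructor
  · rintro ⟨I, hI, hIA, rfl⟩
    rw [restrict_indep_iff] at hI
    exact ⟨I, hI.1, subset_inter hIA hI.2, rfl⟩
  · rintro ⟨I, hI, hIA, rfl⟩
    exact ⟨I, restrict_indep_iff.mpr ⟨hI, hIA.trans inter_subset_right⟩,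
      hIA.trans inter_subset_left, rfl⟩

@[simp] lemma delete_ground (M : Matroid α) (D : Set α) : (delete M D).E = M.E \ D := rfl

@[simp] lemma contract_ground (M : Matroid α) (C : Set α) : (contract M C).E = M.E \ C := rfl

lemma delete_finite [M.Finite] (D : Set α) : (delete M D).Finite :=
  ⟨M.ground_finite.subset diff_subset⟩

lemma contract_finite [M.Finite] (C : Set α) : (contract M C).Finite :=
  ⟨M.ground_finite.subset diff_subset⟩

lemma rk_delete_eq (M : Matroid α) {D A : Set α} (hA : A ⊆ M.E \ D) :
    rk (delete M D) A = rk M A := by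
  rw [delete, rk_restrict, inter_eq_self_of_subset_left hA]

/-- The rank formula for contractions. -/
lemma rk_contract_add (M : Matroid α) [M.Finite] {C A : Set α} (hC : C ⊆ M.E)
    (hA : A ⊆ M.E \ C) : rk (contract M C) A + rk M C = rk M (A ∪ C) := by
  have hEfin := M.ground_finite
  set M₁ := delete M✶ C with hM₁
  haveI : M₁.Finite := delete_finite C
  have hM₁E : M₁.E = M.E \ C := rfl
  have hrk₁ : ∀ Z, Z ⊆ M.E \ C → rk M₁ Z = rk M✶ Z := by
    intro Z hZ
    rw [hM₁, delete, rk_restrict]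
    congr 1
    exact inter_eq_self_of_subset_left hZ
  have e1 : rk M₁✶ A + rk M₁ (M.E \ C) = A.ncard + rk M₁ ((M.E \ C) \ A) := by
    have := rk_dual_add M₁ (A := A) (by rw [hM₁E]; exact hA)
    rwa [hM₁E] at this
  have hr1 : rk M₁ ((M.E \ C) \ A) = rk M✶ ((M.E \ C) \ A) := hrk₁ _ diff_subset
  have hr2 : rk M₁ (M.E \ C) = rk M✶ (M.E \ C) := hrk₁ _ Subset.rfl
  have e2 : rk M✶ (M.E \ C) + rk M M.E = (M.E \ C).ncard + rk M C := by
    have := rk_dual_add M (A := M.E \ C) diff_subset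
    rwa [diff_diff_cancel_left hC] at this
  have e3 : rk M✶ ((M.E \ C) \ A) + rk M M.E = ((M.E \ C) \ A).ncard + rk M (A ∪ C) := by
    have := rk_dual_add M (A := (M.E \ C) \ A) (diff_subset.trans diff_subset)
    rwa [show M.E \ ((M.E \ C) \ A) = A ∪ C by
      rw [diff_diff_right, diff_diff_cancel_left hC, inter_eq_self_of_subset_right
        (hA.trans diff_subset), union_comm]] at this
  have e4 : A.ncard + ((M.E \ C) \ A).ncard = (M.E \ C).ncard := by
    rw [← ncard_union_eq disjoint_sdiff_right (hEfin.subset (hA.trans diff_subset))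
      ((hEfin.subset diff_subset).subset diff_subset), union_diff_cancel hA]
  have : rk (contract M C) A = rk M₁✶ A := rfl
  omega

/-- Equality of finite matroids via rank functions. -/
lemma eq_of_rk_eq {M₁ M₂ : Matroid α} [M₁.Finite] [M₂.Finite] (hE : M₁.E = M₂.E)
    (h : ∀ A ⊆ M₁.E, rk M₁ A = rk M₂ A) : M₁ = M₂ := by
  refine ext_iff_indep.mpr ⟨hE, fun ⦃I⦄ hI => ?_⟩
  rw [indep_iff_rk, indep_iff_rk, ← hE, h I hI]

lemma contract_contract (M : Matroid α) (A B : Set α) :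
    contract (contract M A) B = contract M (A ∪ B) := by
  unfold contract delete
  rw [dual_dual, dual_ground, restrict_ground_eq]
  rw [restrict_restrict_eq _ (by rw [diff_diff]; exact diff_subset_diff_right subset_union_left)]
  rw [diff_diff]

lemma delete_delete (M : Matroid α) (A B : Set α) :
    delete (delete M A) B = delete M (A ∪ B) := by
  unfold delete
  rw [restrict_ground_eq]
  rw [restrict_restrict_eq _ (by rw [diff_diff]; exact diff_subset_diff_right subset_union_left)]
  rw [diff_diff]

lemma delete_contract_comm (M : Matroid α) [M.Finite] {C D : Set α} (hC : C ⊆ M.E)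
    (hD : D ⊆ M.E) (hCD : Disjoint C D) :
    delete (contract M C) D = contract (delete M D) C := by
  haveI := delete_finite (M := M) D
  haveI := contract_finite (M := M) C
  haveI := delete_finite (M := contract M C) D
  haveI := contract_finite (M := delete M D) C
  have hCE : C ⊆ (delete M D).E := by
    rw [delete_ground]; exact subset_diff.mpr ⟨hC, hCD⟩
  refine eq_of_rk_eq ?_ ?_
  · rw [delete_ground, contract_ground, contract_ground, delete_ground, diff_diff_comm]
  intro A hA
  rw [delete_ground, contract_ground] at hA
  have hA' : A ⊆ (M.E \ C) \ D := hA
  have hAC : A ⊆ M.E \ C := hA'.trans diff_subset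
  have h1 : rk (delete (contract M C) D) A = rk (contract M C) A := rk_delete_eq _ hA'
  have h2 : rk (contract M C) A + rk M C = rk M (A ∪ C) := rk_contract_add M hC hAC
  have hAD : A ⊆ (M.E \ D) \ C := by rwa [diff_diff_comm]
  have h3 : rk (contract (delete M D) C) A + rk (delete M D) C = rk (delete M D) (A ∪ C) :=
    rk_contract_add (delete M D) hCE (by rw [delete_ground]; exact hAD)
  have h4 : rk (delete M D) C = rk M C := rk_delete_eq _ hCE
  have h5 : rk (delete M D) (A ∪ C) = rk M (A ∪ C) :=
    rk_delete_eq _ (union_subset (hAD.trans diff_subset) hCE)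
  omega

end NDP
namespace NDP

variable {α : Type*} {M : Matroid α}

open Set Matroid

/-! ### Connectivity function lemmas -/

lemma conn_mono (M : Matroid α) [M.Finite] {A A' B B' : Set α} (hA : A ⊆ A') (hB : B ⊆ B') :
    rk M A + rk M B + rk M (A' ∪ B') ≤ rk M A' + rk M B' + rk M (A ∪ B) := by
  have h1 : rk M (A' ∪ B) + rk M A ≤ rk M (A ∪ B) + rk M A' := rk_diminishing M B hA
  have h2 : rk M (B' ∪ A') + rk M B ≤ rk M (B ∪ A') + rk M B' := rk_diminishing M A' hB
  rw [union_comm B' A'] at h2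
  rw [union_comm B A'] at h2
  omega

lemma lam_eq (M : Matroid α) (X : Set α) :
    lam M X = (rk M X : ℤ) + (rk M (M.E \ X) : ℤ) - (rk M M.E : ℤ) := rfl

lemma lam_nonneg (M : Matroid α) [M.Finite] {X : Set α} (hX : X ⊆ M.E) : 0 ≤ lam M X := by
  have h := rk_submod M X (M.E \ X)
  rw [union_diff_cancel hX, inter_diff_self, rk_empty] at h
  rw [lam_eq]
  push_cast
  omega

lemma one_le_lam_of_connected [M.Finite] (h : Connected M) {X : Set α} (hX : X ⊆ M.E)
    (hne : X.Nonempty) (hne' : (M.E \ X).Nonempty) : 1 ≤ lam M X := by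
  by_contra hlt
  push_neg at hlt
  refine h X ⟨⟨hX, by omega⟩, ?_, ?_⟩
  · simpa [Nat.one_le_iff_ne_zero, Set.ncard_eq_zero (M.ground_finite.subset hX)] using hne.ne_empty
  · simpa [Nat.one_le_iff_ne_zero,
      Set.ncard_eq_zero (M.ground_finite.subset diff_subset)] using hne'.ne_empty

lemma conn_elem [M.Finite] (h : Connected M) (hcard : 2 ≤ M.E.ncard) {e : α} (he : e ∈ M.E) :
    rk M {e} = 1 ∧ rk M (M.E \ {e}) = rk M M.E := by
  have hne' : (M.E \ {e}).Nonempty := by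
    refine nonempty_of_ncard_ne_zero ?_
    rw [ncard_diff_singleton_of_mem he]
    omega
  have hlam := one_le_lam_of_connected h (singleton_subset_iff.mpr he) ⟨e, rfl⟩ hne'
  rw [lam_eq] at hlam
  have h1 : rk M {e} ≤ 1 := by
    simpa using rk_le_ncard (singleton_subset_iff.mpr he)
  have h2 : rk M (M.E \ {e}) ≤ rk M M.E := rk_ground_le_of_subset
  constructor <;> omega

lemma not_connected_iff {M : Matroid α} : ¬ Connected M ↔ ∃ P, IsKSeparation M 1 P := by
  unfold Connected
  push_neg
  rfl

/-! ### lam of deletions and contractions by one element -/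

lemma lam_delete_singleton (M : Matroid α) [M.Finite] {e : α} {A : Set α}
    (hA : A ⊆ M.E \ {e}) :
    lam (delete M {e}) A = (rk M A : ℤ) + (rk M ((M.E \ {e}) \ A) : ℤ) - (rk M (M.E \ {e}) : ℤ)
    := by
  rw [lam_eq, delete_ground, rk_delete_eq _ hA, rk_delete_eq _ (Subset.rfl),
    rk_delete_eq _ (diff_subset : (M.E \ {e}) \ A ⊆ M.E \ {e})]

lemma lam_contract_singleton (M : Matroid α) [M.Finite] {e : α} {A : Set α} (he : e ∈ M.E)
    (hA : A ⊆ M.E \ {e}) :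
    lam (contract M {e}) A =
      (rk M (A ∪ {e}) : ℤ) + (rk M (M.E \ A) : ℤ) - (rk M {e} : ℤ) - (rk M M.E : ℤ) := by
  have he' : {e} ⊆ M.E := singleton_subset_iff.mpr he
  have h1 : rk (contract M {e}) A + rk M {e} = rk M (A ∪ {e}) := rk_contract_add M he' hA
  have h2 : rk (contract M {e}) ((M.E \ {e}) \ A) + rk M {e} = rk M (M.E \ A) := by
    have h := rk_contract_add M he' (A := (M.E \ {e}) \ A) (diff_subset)
    rwa [show (M.E \ {e}) \ A ∪ {e} = M.E \ A by
      rw [diff_diff_comm, diff_union_self, union_eq_self_of_subset_right]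
      exact subset_diff.mpr ⟨he', disjoint_singleton_left.mpr
        (fun hc => (hA hc).2 rfl)⟩] at h
  have h3 : rk (contract M {e}) (M.E \ {e}) + rk M {e} = rk M M.E := by
    have h := rk_contract_add M he' (A := M.E \ {e}) Subset.rfl
    rwa [diff_union_self, union_eq_self_of_subset_right he'] at h
  rw [lam_eq, contract_ground]
  push_cast
  omega

/-! ### Set identities for Tutte's lemma -/

lemma compl_of_sub_diff {E P : Set α} {e : α} (he : e ∈ E) (hPE : P ⊆ E \ {e}) :
    E \ P = ((E \ {e}) \ P) ∪ {e} := by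
  have heP : e ∉ P := fun h => (hPE h).2 rfl
  ext x
  by_cases hxe : x = e
  · subst hxe; simp [he, heP]
  · simp only [mem_diff, mem_union, mem_singleton_iff, hxe, or_false]
    tauto

lemma compl_corner {E P Q S T : Set α} {e : α} (he : e ∈ E) (hPE : P ⊆ E \ {e})
    (hSE : S ⊆ E \ {e}) (hQ : Q = (E \ {e}) \ P) (hT : T = (E \ {e}) \ S) :
    E \ (P ∩ S) = (Q ∪ T) ∪ {e} := by
  subst hQ hT
  have heP : e ∉ P := fun h => (hPE h).2 rfl
  ext x
  by_cases hxe : x = e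
  · subst hxe; simp [he, heP]
  · simp only [mem_diff, mem_inter_iff, mem_union, mem_singleton_iff, hxe, or_false,
      and_true, true_and]
    tauto

/-! ### Tutte's deletion-contraction connectivity lemma -/

private lemma tut_corner (M : Matroid α) [M.Finite] (hconn : Connected M) {e : α}
    {P Q S T : Set α}
    (he : e ∈ M.E) (hPE : P ⊆ M.E \ {e}) (hSE : S ⊆ M.E \ {e})
    (hQ : Q = (M.E \ {e}) \ P) (hT : T = (M.E \ {e}) \ S)
    (ha1 : rk M P + rk M Q ≤ rk M M.E)
    (hb1 : rk M S + rk M T ≤ rk M M.E + 1)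
    (hSe : rk M (S ∪ {e}) = rk M S) (hTe : rk M (T ∪ {e}) = rk M T)
    (hPS : (P ∩ S).Nonempty) (hQT : (Q ∩ T).Nonempty) : False := by
  have hcompPS : M.E \ (P ∩ S) = (Q ∪ T) ∪ {e} := compl_corner he hPE hSE hQ hT
  have hQE : Q ⊆ M.E \ {e} := hQ ▸ diff_subset
  have hTE : T ⊆ M.E \ {e} := hT ▸ diff_subset
  have hPQ : P = (M.E \ {e}) \ Q := by rw [hQ, diff_diff_cancel_left hPE]
  have hST : S = (M.E \ {e}) \ T := by rw [hT, diff_diff_cancel_left hSE]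
  have hcompQT : M.E \ (Q ∩ T) = (P ∪ S) ∪ {e} := compl_corner he hQE hTE hPQ hST
  -- c1
  have hc1 : rk M (P ∩ S) + rk M ((Q ∪ T) ∪ {e}) ≥ rk M M.E + 1 := by
    have h := one_le_lam_of_connected hconn
      ((inter_subset_left).trans (hPE.trans diff_subset)) hPS (by rw [hcompPS]; exact
        ⟨e, Or.inr rfl⟩)
    rw [lam_eq, hcompPS] at h
    omega
  -- c2
  have hc2 : rk M ((Q ∪ T) ∪ {e}) ≤ rk M (Q ∪ T) := by
    have h := rk_diminishing M (A := T) (B := Q ∪ T) {e} subset_union_right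
    omega
  -- c3
  have hc3 : rk M (Q ∪ T) + rk M (Q ∩ T) ≤ rk M Q + rk M T := rk_submod M Q T
  -- c4
  have hc4 : rk M (Q ∩ T) + rk M ((P ∪ S) ∪ {e}) ≥ rk M M.E + 1 := by
    have h := one_le_lam_of_connected hconn
      ((inter_subset_left).trans (hQE.trans diff_subset)) hQT (by rw [hcompQT]; exact
        ⟨e, Or.inr rfl⟩)
    rw [lam_eq, hcompQT] at h
    omega
  -- c5
  have hc5 : rk M ((P ∪ S) ∪ {e}) ≤ rk M (P ∪ S) := by
    have h := rk_diminishing M (A := S) (B := P ∪ S) {e} subset_union_right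
    omega
  -- c6
  have hc6 : rk M (P ∪ S) + rk M (P ∩ S) ≤ rk M P + rk M S := rk_submod M P S
  omega

lemma tutte (M : Matroid α) [M.Finite] (hconn : Connected M) (hcard : 2 ≤ M.E.ncard) {e : α}
    (he : e ∈ M.E) : Connected (delete M {e}) ∨ Connected (contract M {e}) := by
  by_contra hcon
  push_neg at hcon
  obtain ⟨hd, hc⟩ := hcon
  rw [not_connected_iff] at hd hc
  obtain ⟨P, ⟨hPE', hPlam⟩, hP1, hP1'⟩ := hd
  obtain ⟨S, ⟨hSE', hSlam⟩, hS1, hS1'⟩ := hc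
  rw [delete_ground] at hPE' hP1'
  rw [contract_ground] at hSE' hS1'
  set Q := (M.E \ {e}) \ P with hQ
  set T := (M.E \ {e}) \ S with hT
  obtain ⟨he1, he2⟩ := conn_elem hconn hcard he
  have hQE : Q ⊆ M.E \ {e} := by rw [hQ]; exact diff_subset
  have hTE : T ⊆ M.E \ {e} := by rw [hT]; exact diff_subset
  have hPQ : P = (M.E \ {e}) \ Q := by rw [hQ, diff_diff_cancel_left hPE']
  have hST : S = (M.E \ {e}) \ T := by rw [hT, diff_diff_cancel_left hSE']
  -- facts from the deletion separation
  have ha1 : rk M P + rk M Q ≤ rk M M.E := by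
    rw [lam_delete_singleton M hPE', ← hQ] at hPlam
    push_cast at hPlam
    omega
  have hPne : P.Nonempty := nonempty_of_ncard_ne_zero (by omega)
  have hQne : Q.Nonempty := nonempty_of_ncard_ne_zero (by omega)
  have hSne : S.Nonempty := nonempty_of_ncard_ne_zero (by omega)
  have hTne : T.Nonempty := nonempty_of_ncard_ne_zero (by omega)
  -- facts from the contraction separation
  have hcompS : M.E \ S = T ∪ {e} := by rw [compl_of_sub_diff he hSE', ← hT]
  have hcompT : M.E \ T = S ∪ {e} := by rw [compl_of_sub_diff he hTE, ← hST]
  have hcompP : M.E \ P = Q ∪ {e} := by rw [compl_of_sub_diff he hPE', ← hQ]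
  have hb1' : rk M (S ∪ {e}) + rk M (T ∪ {e}) ≤ rk M M.E + 1 := by
    rw [lam_contract_singleton M he hSE', hcompS] at hSlam
    push_cast at hSlam
    omega
  -- connectivity of M applied to S and T
  have hlamS : rk M S + rk M (T ∪ {e}) ≥ rk M M.E + 1 := by
    have h := one_le_lam_of_connected hconn (hSE'.trans diff_subset) hSne
      (by rw [hcompS]; exact ⟨e, Or.inr rfl⟩)
    rw [lam_eq, hcompS] at h
    omega
  have hlamT : rk M T + rk M (S ∪ {e}) ≥ rk M M.E + 1 := by
    have h := one_le_lam_of_connected hconn (hTE.trans diff_subset) hTne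
      (by rw [hcompT]; exact ⟨e, Or.inr rfl⟩)
    rw [lam_eq, hcompT] at h
    omega
  have hmonoS : rk M S ≤ rk M (S ∪ {e}) := rk_mono subset_union_left
  have hmonoT : rk M T ≤ rk M (T ∪ {e}) := rk_mono subset_union_left
  have hSe : rk M (S ∪ {e}) = rk M S := by omega
  have hTe : rk M (T ∪ {e}) = rk M T := by omega
  have hb1 : rk M S + rk M T ≤ rk M M.E + 1 := by omega
  -- case analysis on the corners
  rcases (P ∩ S).eq_empty_or_nonempty with hPS | hPS
  · -- P ⊆ T, S ⊆ Q ; use corners (P ∩ T) and (Q ∩ S)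
    have hPT : (P ∩ T).Nonempty := by
      obtain ⟨x, hx⟩ := hPne
      refine ⟨x, hx, ?_⟩
      rw [hT]
      exact ⟨hPE' hx, fun hxS => (eq_empty_iff_forall_notMem.mp hPS x) ⟨hx, hxS⟩⟩
    have hQS : (Q ∩ S).Nonempty := by
      obtain ⟨x, hx⟩ := hSne
      refine ⟨x, ?_, hx⟩
      rw [hQ]
      exact ⟨hSE' hx, fun hxP => (eq_empty_iff_forall_notMem.mp hPS x) ⟨hxP, hx⟩⟩
    exact tut_corner M hconn he hPE' hTE hQ hST ha1 (by omega) hTe hSe hPT hQS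
  rcases (Q ∩ T).eq_empty_or_nonempty with hQT | hQT
  · -- T ⊆ P, Q ⊆ S ; use corners (P ∩ T) and (Q ∩ S)
    have hPT : (P ∩ T).Nonempty := by
      obtain ⟨x, hx⟩ := hTne
      refine ⟨x, ?_, hx⟩
      by_contra hxP
      have hxQ : x ∈ Q := by rw [hQ]; exact ⟨hTE hx, hxP⟩
      exact (eq_empty_iff_forall_notMem.mp hQT x) ⟨hxQ, hx⟩
    have hQS : (Q ∩ S).Nonempty := by
      obtain ⟨x, hx⟩ := hQne
      refine ⟨x, hx, ?_⟩
      by_contra hxS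
      have hxT : x ∈ T := by rw [hT]; exact ⟨hQE hx, hxS⟩
      exact (eq_empty_iff_forall_notMem.mp hQT x) ⟨hx, hxT⟩
    exact tut_corner M hconn he hPE' hTE hQ hST ha1 (by omega) hTe hSe hPT hQS
  exact tut_corner M hconn he hPE' hSE' hQ hT ha1 hb1 hSe hTe hPS hQT

end NDP
namespace NDP

variable {α : Type*} {M : Matroid α}

open Set Matroid

/-! ### Duality of lam and connectivity -/

lemma lam_dual (M : Matroid α) [M.Finite] {X : Set α} (hX : X ⊆ M.E) :
    lam M✶ X = lam M X := by
  have hEfin := M.ground_finite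
  have e1 := rk_dual_add M hX
  have e2 := rk_dual_add M (A := M.E \ X) diff_subset
  rw [diff_diff_cancel_left hX] at e2
  have e3 := rk_dual_add M (A := M.E) Subset.rfl
  rw [diff_self, rk_empty] at e3
  have e4 : X.ncard + (M.E \ X).ncard = M.E.ncard := by
    have := ncard_diff_add_ncard_of_subset hX hEfin
    omega
  rw [lam_eq, lam_eq, dual_ground]
  push_cast
  omega

lemma connected_dual_of [M.Finite] (h : Connected M) : Connected M✶ := by
  intro Z hZ
  obtain ⟨⟨hZE, hZlam⟩, hZ1, hZ1'⟩ := hZ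
  rw [dual_ground] at hZE hZ1'
  rw [lam_dual M hZE] at hZlam
  exact h Z ⟨⟨hZE, hZlam⟩, hZ1, hZ1'⟩

lemma connected_dual_iff [M.Finite] : Connected M✶ ↔ Connected M := by
  constructor
  · intro h
    have := connected_dual_of (M := M✶) h
    rwa [dual_dual] at this
  · exact connected_dual_of

lemma threeConnected_dual {N : Matroid α} [N.Finite] (h : ThreeConnected N) :
    ThreeConnected N✶ := by
  intro k hk Z hZ
  obtain ⟨⟨hZE, hZlam⟩, hZ1, hZ1'⟩ := hZ
  rw [dual_ground] at hZE hZ1'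
  rw [lam_dual N hZE] at hZlam
  exact h k hk Z ⟨⟨hZE, hZlam⟩, hZ1, hZ1'⟩

/-! ### map lemmas -/

lemma exists_image_rep {f : α → α} {E A : Set α} (hA : A ⊆ f '' E) :
    ∃ B, B ⊆ E ∧ A = f '' B := by
  refine ⟨E ∩ f ⁻¹' A, inter_subset_left, ?_⟩
  apply Subset.antisymm
  · intro a ha
    obtain ⟨x, hxE, rfl⟩ := hA ha
    exact ⟨x, ⟨hxE, ha⟩, rfl⟩
  · rintro a ⟨x, ⟨-, hx⟩, rfl⟩
    exact hx

lemma map_finite {N : Matroid α} [N.Finite] {f : α → α} (hf : InjOn f N.E) :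
    (N.map f hf).Finite := by
  refine ⟨?_⟩
  rw [map_ground]
  exact N.ground_finite.image f

lemma rk_map_image {N : Matroid α} [N.Finite] {f : α → α} (hf : InjOn f N.E) {B : Set α}
    (hB : B ⊆ N.E) : rk (N.map f hf) (f '' B) = rk N B := by
  haveI := map_finite hf
  apply le_antisymm
  · refine rk_le_of_forall fun J hJ hJB => ?_
    obtain ⟨I, hI, rfl⟩ := map_indep_iff.mp hJ
    have hIB : I ⊆ B := by
      intro x hx
      obtain ⟨b, hbB, hfb⟩ := hJB ⟨x, hx, rfl⟩
      rwa [← hf (hB hbB) (hI.subset_ground hx) hfb]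
    rw [ncard_image_of_injOn (hf.mono hI.subset_ground)]
    exact ncard_le_rk hI hIB
  · obtain ⟨I, hI, hrk⟩ := exists_rk_basis N B
    rw [inter_eq_self_of_subset_left hB] at hI
    rw [hrk, ← ncard_image_of_injOn (hf.mono hI.indep.subset_ground)]
    exact ncard_le_rk (hI.indep.map f hf) (image_mono hI.subset)

lemma map_dual {N : Matroid α} [N.Finite] {f : α → α} (hf : InjOn f N.E) :
    (N.map f hf)✶ = N✶.map f hf := by
  haveI hmf := map_finite hf
  haveI : (N.map f hf)✶.Finite := inferInstance
  haveI : N✶.Finite := inferInstance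
  haveI : (N✶.map f hf).Finite := map_finite (N := N✶) hf
  refine eq_of_rk_eq rfl ?_
  intro A hA
  have hA' : A ⊆ f '' N.E := hA
  obtain ⟨B, hB, rfl⟩ := exists_image_rep hA'
  have himg : f '' N.E \ f '' B = f '' (N.E \ B) := (hf.image_diff_subset hB).symm
  have e1 : rk (N.map f hf)✶ (f '' B) + rk (N.map f hf) ((N.map f hf).E) =
      (f '' B).ncard + rk (N.map f hf) ((N.map f hf).E \ f '' B) :=
    rk_dual_add _ hA
  have e2 : rk (N.map f hf) ((N.map f hf).E) = rk N N.E := by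
    have : (N.map f hf).E = f '' N.E := rfl
    rw [this, rk_map_image hf Subset.rfl]
  have e3 : rk (N.map f hf) ((N.map f hf).E \ f '' B) = rk N (N.E \ B) := by
    have : (N.map f hf).E = f '' N.E := rfl
    rw [this, himg, rk_map_image hf diff_subset]
  have e4 : rk (N✶.map f hf) (f '' B) = rk N✶ B := rk_map_image (N := N✶) hf hB
  have e5 : rk N✶ B + rk N N.E = B.ncard + rk N (N.E \ B) := rk_dual_add N hB
  have e6 : (f '' B).ncard = B.ncard := ncard_image_of_injOn (hf.mono hB)
  omega

/-! ### Minor lemmas -/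

lemma minor_ground {N : Matroid α} (h : Minor N M) : N.E ⊆ M.E := by
  obtain ⟨C, D, rfl⟩ := h
  rw [delete_ground, contract_ground]
  exact diff_subset.trans diff_subset

lemma minor_finite {N : Matroid α} [M.Finite] (h : Minor N M) : N.Finite :=
  ⟨M.ground_finite.subset (minor_ground h)⟩

lemma contract_eq_contract_inter_ground (M : Matroid α) (C : Set α) :
    contract M C = contract M (C ∩ M.E) := by
  unfold contract delete
  rw [dual_ground, diff_inter_self_eq_diff]

lemma minor_normalize {N : Matroid α} (h : Minor N M) :
    ∃ C D, C ⊆ M.E ∧ D ⊆ M.E ∧ Disjoint C D ∧ Disjoint C N.E ∧ Disjoint D N.E ∧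
      C ∪ (D ∪ N.E) = M.E ∧ N = delete (contract M C) D := by
  obtain ⟨C0, D0, rfl⟩ := h
  set Q := contract M (C0 ∩ M.E) with hQdef
  have hcc : contract M C0 = Q := contract_eq_contract_inter_ground M C0
  set G := (delete (contract M C0) D0).E with hG
  have hGQ : G ⊆ Q.E := by
    rw [hG, delete_ground, hcc]
    exact diff_subset
  have hND : delete (contract M C0) D0 = delete Q (Q.E \ G) := by
    rw [hcc]
    unfold delete
    congr 1
    rw [diff_diff_cancel_left hGQ, hG, delete_ground, hcc]
  have hQE : Q.E = M.E \ (C0 ∩ M.E) := rfl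
  refine ⟨C0 ∩ M.E, Q.E \ G, inter_subset_right, ?_, ?_, ?_, ?_, ?_, hND⟩
  · rw [hQE]; exact diff_subset.trans diff_subset
  · exact disjoint_sdiff_right.mono_right (diff_subset.trans hQE.subset)
  · have hGsub : G ⊆ M.E \ (C0 ∩ M.E) := hQE ▸ hGQ
    exact (subset_diff.mp hGsub).2.symm
  · exact disjoint_sdiff_left
  · rw [diff_union_of_subset hGQ, hQE, union_diff_cancel inter_subset_right]

/-! ### lam and minors -/

lemma lam_contract_le (M : Matroid α) [M.Finite] {C X : Set α} (hC : C ⊆ M.E) (hX : X ⊆ M.E) :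
    lam (contract M C) (X \ C) ≤ lam M X := by
  haveI := contract_finite (M := M) C
  have hXC : X \ C ⊆ M.E \ C := diff_subset_diff_left hX
  have hcompl : (M.E \ C) \ (X \ C) = (M.E \ X) \ C := by
    ext x; simp only [mem_diff]; tauto
  have h1 : rk (contract M C) (X \ C) + rk M C = rk M (X ∪ C) := by
    have := rk_contract_add M hC hXC
    rwa [diff_union_self] at this
  have h2 : rk (contract M C) ((M.E \ X) \ C) + rk M C = rk M ((M.E \ X) ∪ C) := by
    have := rk_contract_add M hC (A := (M.E \ X) \ C)
      (diff_subset_diff_left (diff_subset : M.E \ X ⊆ M.E))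
    rwa [diff_union_self] at this
  have h3 : rk (contract M C) (M.E \ C) + rk M C = rk M M.E := by
    have := rk_contract_add M hC Subset.rfl
    rwa [diff_union_self, union_eq_self_of_subset_right hC] at this
  have s1 : rk M (X ∪ C) + rk M (X ∩ C) ≤ rk M X + rk M C := rk_submod M X C
  have s2 : rk M ((M.E \ X) ∪ C) + rk M ((M.E \ X) ∩ C) ≤ rk M (M.E \ X) + rk M C :=
    rk_submod M (M.E \ X) C
  have s3 : rk M C ≤ rk M (X ∩ C) + rk M ((M.E \ X) ∩ C) := by
    have h := rk_submod M (X ∩ C) ((M.E \ X) ∩ C)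
    have hun : (X ∩ C) ∪ ((M.E \ X) ∩ C) = C := by
      apply Subset.antisymm (union_subset inter_subset_right inter_subset_right)
      intro x hx
      rcases em (x ∈ X) with hxX | hxX
      · exact Or.inl ⟨hxX, hx⟩
      · exact Or.inr ⟨⟨hC hx, hxX⟩, hx⟩
    have hdisj : (X ∩ C) ∩ ((M.E \ X) ∩ C) = ∅ := by
      ext x; simp only [mem_inter_iff, mem_diff, mem_empty_iff_false]; tauto
    rw [hun, hdisj, rk_empty] at h
    omega
  rw [lam_eq, lam_eq, contract_ground, hcompl]
  push_cast
  omega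

lemma lam_delete_le (M : Matroid α) [M.Finite] {D X : Set α} (hD : D ⊆ M.E) (hX : X ⊆ M.E) :
    lam (delete M D) (X \ D) ≤ lam M X := by
  haveI := delete_finite (M := M) D
  have hcompl : (M.E \ D) \ (X \ D) = (M.E \ X) \ D := by
    ext x; simp only [mem_diff]; tauto
  have r1 : rk (delete M D) (X \ D) = rk M (X \ D) := rk_delete_eq _ (diff_subset_diff_left hX)
  have r2 : rk (delete M D) ((M.E \ X) \ D) = rk M ((M.E \ X) \ D) :=
    rk_delete_eq _ (diff_subset_diff_left diff_subset)
  have r3 : rk (delete M D) (M.E \ D) = rk M (M.E \ D) := rk_delete_eq _ Subset.rfl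
  have hXid : (X \ D) ∪ (D ∩ X) = X := by
    ext x
    simp only [mem_union, mem_diff, mem_inter_iff]
    constructor
    · rintro (⟨h, -⟩ | ⟨-, h⟩) <;> exact h
    · intro hx
      rcases em (x ∈ D) with h | h
      · exact Or.inr ⟨h, hx⟩
      · exact Or.inl ⟨hx, h⟩
  have hYid : ((M.E \ X) \ D) ∪ (D ∩ (M.E \ X)) = M.E \ X := by
    ext x
    simp only [mem_union, mem_diff, mem_inter_iff]
    constructor
    · rintro (⟨h, -⟩ | ⟨-, h⟩) <;> exact h
    · intro hx
      rcases em (x ∈ D) with h | h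
      · exact Or.inr ⟨h, hx⟩
      · exact Or.inl ⟨hx, h⟩
  have d1 : rk M ((M.E \ D) ∪ (D ∩ X)) + rk M (X \ D) ≤ rk M X + rk M (M.E \ D) := by
    have := rk_diminishing M (A := X \ D) (B := M.E \ D) (D ∩ X) (diff_subset_diff_left hX)
    rwa [hXid] at this
  have d2 : rk M ((M.E \ D) ∪ (D ∩ (M.E \ X))) + rk M ((M.E \ X) \ D) ≤
      rk M (M.E \ X) + rk M (M.E \ D) := by
    have := rk_diminishing M (A := (M.E \ X) \ D) (B := M.E \ D) (D ∩ (M.E \ X))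
      (diff_subset_diff_left diff_subset)
    rwa [hYid] at this
  have d3 : rk M M.E + rk M (M.E \ D) ≤
      rk M ((M.E \ D) ∪ (D ∩ X)) + rk M ((M.E \ D) ∪ (D ∩ (M.E \ X))) := by
    have h := rk_submod M ((M.E \ D) ∪ (D ∩ X)) ((M.E \ D) ∪ (D ∩ (M.E \ X)))
    have hun : ((M.E \ D) ∪ (D ∩ X)) ∪ ((M.E \ D) ∪ (D ∩ (M.E \ X))) = M.E := by
      apply Subset.antisymm
      · refine union_subset (union_subset diff_subset (inter_subset_left.trans hD))
          (union_subset diff_subset (inter_subset_left.trans hD))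
      · intro x hx
        rcases em (x ∈ D) with h' | h'
        · rcases em (x ∈ X) with h'' | h''
          · exact Or.inl (Or.inr ⟨h', h''⟩)
          · exact Or.inr (Or.inr ⟨h', hx, h''⟩)
        · exact Or.inl (Or.inl ⟨hx, h'⟩)
    have hmono : rk M (M.E \ D) ≤
        rk M (((M.E \ D) ∪ (D ∩ X)) ∩ ((M.E \ D) ∪ (D ∩ (M.E \ X)))) :=
      rk_mono (subset_inter subset_union_left subset_union_left)
    rw [hun] at h
    omega
  rw [lam_eq, lam_eq, delete_ground, hcompl, r1, r2, r3]
  push_cast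
  omega

lemma lam_minor_le (M : Matroid α) [M.Finite] {C D X : Set α} (hC : C ⊆ M.E) (hD : D ⊆ M.E)
    (hCD : Disjoint C D) (hX : X ⊆ M.E) :
    lam (delete (contract M C) D) ((X \ C) \ D) ≤ lam M X := by
  haveI := contract_finite (M := M) C
  have h1 : lam (delete (contract M C) D) ((X \ C) \ D) ≤ lam (contract M C) (X \ C) := by
    have := lam_delete_le (contract M C) (D := D) (X := X \ C) ?_ (diff_subset_diff_left hX)
    · exact this
    · rw [contract_ground]
      exact subset_diff.mpr ⟨hD, hCD.symm⟩
  exact h1.trans (lam_contract_le M hC hX)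

end NDP
namespace NDP

variable {α : Type*} {M : Matroid α}

open Set Matroid

/-- `lam M X = 1` as a ℕ equation. -/
lemma lamN {X : Set α} [M.Finite] (h : lam M X = 1) :
    rk M X + rk M (M.E \ X) = rk M M.E + 1 := by
  rw [lam_eq] at h
  omega

lemma skew_prop (M : Matroid α) [M.Finite] {X C A : Set α} (hXE : X ⊆ M.E) (hC : C ⊆ X)
    (hA : A ⊆ M.E \ X) (hskew : rk M (C ∪ (M.E \ X)) = rk M C + rk M (M.E \ X)) :
    rk M (A ∪ C) = rk M A + rk M C := by
  have h1 := conn_mono M (A := C) (A' := C) (B := A) (B' := M.E \ X) Subset.rfl hA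
  have h2 := rk_submod M C A
  have hCA : C ∩ A = ∅ := by
    ext x; simp only [mem_inter_iff, mem_empty_iff_false, iff_false]
    rintro ⟨hxC, hxA⟩
    exact (hA hxA).2 (hC hxC)
  rw [hCA, rk_empty] at h2
  rw [union_comm A C]
  omega

lemma nonskew_prop (M : Matroid α) [M.Finite] {X C A : Set α} (hXE : X ⊆ M.E)
    (hlam : lam M X = 1) (hC : C ⊆ X) (hA : A ⊆ M.E \ X)
    (hns : rk M (C ∪ (M.E \ X)) + 1 = rk M C + rk M (M.E \ X)) :
    rk M (A ∪ C) + rk M X = rk M C + rk M (A ∪ X) := by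
  have hl := lamN hlam
  -- (i) lower bound via diminishing returns
  have d1 : rk M ((A ∪ C) ∪ X) + rk M C ≤ rk M (C ∪ X) + rk M (A ∪ C) :=
    rk_diminishing M X (subset_union_right)
  have hACX : (A ∪ C) ∪ X = A ∪ X := by
    rw [union_assoc, union_eq_self_of_subset_left hC]
  have hCX : C ∪ X = X := union_eq_self_of_subset_left hC
  rw [hACX, hCX] at d1
  -- (ii) upper bound via submodularity
  have hUV : (C ∪ (M.E \ X)) ∪ (A ∪ X) = M.E := by
    apply Subset.antisymm
    · exact union_subset (union_subset (hC.trans hXE) diff_subset)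
        (union_subset (hA.trans diff_subset) hXE)
    · intro x hx
      rcases em (x ∈ X) with h | h
      · exact Or.inr (Or.inr h)
      · exact Or.inl (Or.inr ⟨hx, h⟩)
  have hIV : (C ∪ (M.E \ X)) ∩ (A ∪ X) = A ∪ C := by
    ext x
    simp only [mem_inter_iff, mem_union, mem_diff]
    constructor
    · rintro ⟨hC' | hY, hA' | hX'⟩
      · exact Or.inr hC'
      · exact Or.inr hC'
      · exact Or.inl hA'
      · exact absurd hX' hY.2
    · rintro (hA' | hC')
      · exact ⟨Or.inr (hA hA'), Or.inl hA'⟩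
      · exact ⟨Or.inl hC', Or.inr (hC hC')⟩
  have s := rk_submod M (C ∪ (M.E \ X)) (A ∪ X)
  rw [hUV, hIV] at s
  omega

lemma conn_dichotomy (M : Matroid α) [M.Finite] {X C : Set α} (hXE : X ⊆ M.E)
    (hlam : lam M X = 1) (hC : C ⊆ X) :
    rk M (C ∪ (M.E \ X)) = rk M C + rk M (M.E \ X) ∨
    rk M (C ∪ (M.E \ X)) + 1 = rk M C + rk M (M.E \ X) := by
  have hl := lamN hlam
  have h1 := conn_mono M (A := C) (A' := X) (B := M.E \ X) (B' := M.E \ X) hC Subset.rfl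
  rw [union_diff_cancel hXE] at h1
  have h2 := rk_submod M C (M.E \ X)
  have hCA : C ∩ (M.E \ X) = ∅ := by
    ext x; simp only [mem_inter_iff, mem_diff, mem_empty_iff_false, iff_false]
    rintro ⟨hxC, -, hx⟩
    exact hx (hC hxC)
  rw [hCA, rk_empty] at h2
  omega

lemma x0_skew (M : Matroid α) [M.Finite] {X C : Set α} {x₀ : α} (hXE : X ⊆ M.E)
    (hlam : lam M X = 1) (hx₀ : x₀ ∈ X) (hC : C ⊆ X \ {x₀})
    (hnl : rk M (C ∪ {x₀}) = rk M C + 1)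
    (hncl : rk M ((C ∪ (M.E \ X)) ∪ {x₀}) = rk M (C ∪ (M.E \ X))) :
    rk M (C ∪ (M.E \ X)) = rk M C + rk M (M.E \ X) := by
  have hl := lamN hlam
  have hCX : C ⊆ X := hC.trans diff_subset
  rcases conn_dichotomy M hXE hlam hCX with h | h
  · exact h
  exfalso
  have hUV : X ∪ ((C ∪ (M.E \ X)) ∪ {x₀}) = M.E := by
    apply Subset.antisymm
    · exact union_subset hXE (union_subset (union_subset (hCX.trans hXE) diff_subset)
        (singleton_subset_iff.mpr (hXE hx₀)))
    · intro x hx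
      rcases em (x ∈ X) with h' | h'
      · exact Or.inl h'
      · exact Or.inr (Or.inl (Or.inr ⟨hx, h'⟩))
  have hIV : X ∩ ((C ∪ (M.E \ X)) ∪ {x₀}) = C ∪ {x₀} := by
    ext x
    simp only [mem_inter_iff, mem_union, mem_diff, mem_singleton_iff]
    constructor
    · rintro ⟨hxX, (hxC | hxY) | hxe⟩
      · exact Or.inl hxC
      · exact absurd hxX hxY.2
      · exact Or.inr hxe
    · rintro (hxC | rfl)
      · exact ⟨hCX hxC, Or.inl (Or.inl hxC)⟩
      · exact ⟨hx₀, Or.inr rfl⟩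
  have s := rk_submod M X ((C ∪ (M.E \ X)) ∪ {x₀})
  rw [hUV, hIV] at s
  omega

lemma x0_piece (M : Matroid α) [M.Finite] {X C A : Set α} {x₀ : α} (hXE : X ⊆ M.E)
    (hlam : lam M X = 1) (hx₀ : x₀ ∈ X) (hC : C ⊆ X \ {x₀})
    (hnl : rk M (C ∪ {x₀}) = rk M C + 1)
    (hncl : rk M ((C ∪ (M.E \ X)) ∪ {x₀}) = rk M (C ∪ (M.E \ X)))
    (hA : A ⊆ M.E \ X) :
    rk M ((A ∪ C) ∪ {x₀}) + rk M X = rk M C + rk M (A ∪ X) + 1 := by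
  have hl := lamN hlam
  have hskew := x0_skew M hXE hlam hx₀ hC hnl hncl
  have hCX : C ⊆ X := hC.trans diff_subset
  -- u1 : submod on ((A ∪ C) ∪ {x₀}, X)
  have hU1 : ((A ∪ C) ∪ {x₀}) ∪ X = A ∪ X := by
    ext x
    simp only [mem_union, mem_singleton_iff]
    constructor
    · rintro (((h | h) | rfl) | h)
      · exact Or.inl h
      · exact Or.inr (hCX h)
      · exact Or.inr hx₀
      · exact Or.inr h
    · rintro (h | h)
      · exact Or.inl (Or.inl (Or.inl h))
      · exact Or.inr h
  have hI1 : ((A ∪ C) ∪ {x₀}) ∩ X = C ∪ {x₀} := by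
    ext x
    simp only [mem_inter_iff, mem_union, mem_singleton_iff]
    constructor
    · rintro ⟨(hxA | hxC) | hxe, hxX⟩
      · exact absurd hxX (hA hxA).2
      · exact Or.inl hxC
      · exact Or.inr hxe
    · rintro (hxC | rfl)
      · exact ⟨Or.inl (Or.inr hxC), hCX hxC⟩
      · exact ⟨Or.inr rfl, hx₀⟩
  have u1 := rk_submod M ((A ∪ C) ∪ {x₀}) X
  rw [hU1, hI1] at u1
  -- u2 : submod on (A ∪ X, (C ∪ (M.E \ X)) ∪ {x₀})
  have hU2 : (A ∪ X) ∪ ((C ∪ (M.E \ X)) ∪ {x₀}) = M.E := by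
    apply Subset.antisymm
    · exact union_subset (union_subset (hA.trans diff_subset) hXE)
        (union_subset (union_subset (hCX.trans hXE) diff_subset)
          (singleton_subset_iff.mpr (hXE hx₀)))
    · intro x hx
      rcases em (x ∈ X) with h' | h'
      · exact Or.inl (Or.inr h')
      · exact Or.inr (Or.inl (Or.inr ⟨hx, h'⟩))
  have hI2 : (A ∪ X) ∩ ((C ∪ (M.E \ X)) ∪ {x₀}) = (A ∪ C) ∪ {x₀} := by
    ext x
    simp only [mem_inter_iff, mem_union, mem_diff, mem_singleton_iff]
    constructor
    · rintro ⟨hxA | hxX, (hxC | hxY) | hxe⟩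
      · exact Or.inl (Or.inl hxA)
      · exact Or.inl (Or.inl hxA)
      · exact Or.inr hxe
      · exact Or.inl (Or.inr hxC)
      · exact absurd hxX hxY.2
      · exact Or.inr hxe
    · rintro ((hxA | hxC) | rfl)
      · exact ⟨Or.inl hxA, Or.inl (Or.inr (hA hxA))⟩
      · exact ⟨Or.inr (hCX hxC), Or.inl (Or.inl hxC)⟩
      · exact ⟨Or.inr hx₀, Or.inr rfl⟩
  have u2 := rk_submod M (A ∪ X) ((C ∪ (M.E \ X)) ∪ {x₀})
  rw [hU2, hI2] at u2
  omega

/-- Existence of a contraction set putting `x₀` "in parallel to the guts"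
of a 2-separation of a connected matroid. -/
lemma exists_good_C (n : ℕ) : ∀ (M : Matroid α), M.Finite → Connected M →
    ∀ (X : Set α) (x₀ : α), X ⊆ M.E → X.ncard = n → lam M X = 1 → x₀ ∈ X →
    2 ≤ (M.E \ X).ncard →
    ∃ C, C ⊆ X \ {x₀} ∧ rk M (C ∪ {x₀}) = rk M C + 1 ∧
      rk M ((C ∪ (M.E \ X)) ∪ {x₀}) = rk M (C ∪ (M.E \ X)) := by
  induction n using Nat.strong_induction_on with
  | _ n IH =>
  intro M hfin hconn X x₀ hXE hXn hlam hx₀ hY2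
  haveI := hfin
  have hEfin := M.ground_finite
  have hl := lamN hlam
  have hYE : M.E \ X ⊆ M.E := diff_subset
  have hEcard : 2 ≤ M.E.ncard := le_trans hY2 (ncard_le_ncard hYE hEfin)
  obtain ⟨hx₀rk, -⟩ := conn_elem hconn hEcard (hXE hx₀)
  by_cases hx : rk M ((M.E \ X) ∪ {x₀}) = rk M (M.E \ X)
  · refine ⟨∅, empty_subset _, ?_, ?_⟩
    · rw [empty_union, rk_empty, hx₀rk]
    · rw [empty_union, hx]
  -- Now X must have at least two elements
  have hX2 : 2 ≤ X.ncard := by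
    by_contra h2
    push_neg at h2
    have hX1 : X.ncard = 1 := by
      have : X.Nonempty := ⟨x₀, hx₀⟩
      have := (ncard_eq_zero (hEfin.subset hXE)).not.mpr this.ne_empty
      omega
    obtain ⟨a, ha⟩ := ncard_eq_one.mp hX1
    have hax : a = x₀ := by
      have h := hx₀; rw [ha, mem_singleton_iff] at h; exact h.symm
    subst hax
    rw [ha] at hl hx
    rw [hx₀rk] at hl
    have h1 : rk M ((M.E \ {a}) ∪ {a}) ≤ rk M M.E :=
      rk_mono (union_subset diff_subset (singleton_subset_iff.mpr (hXE hx₀)))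
    have h2 : rk M (M.E \ {a}) ≤ rk M ((M.E \ {a}) ∪ {a}) := rk_mono subset_union_left
    exact hx (by omega)
  obtain ⟨w, hw⟩ : (X \ {x₀}).Nonempty := by
    refine nonempty_of_ncard_ne_zero ?_
    rw [ncard_diff_singleton_of_mem hx₀]
    omega
  have hwE : w ∈ M.E := hXE hw.1
  obtain ⟨hwrk, hwrk'⟩ := conn_elem hconn hEcard hwE
  have hXw : X \ {w} ⊆ M.E \ {w} := diff_subset_diff_left hXE
  have hYw : (M.E \ {w}) \ (X \ {w}) = M.E \ X := by
    ext x
    simp only [mem_diff, mem_singleton_iff]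
    constructor
    · rintro ⟨⟨hxE, hxw⟩, hx⟩
      exact ⟨hxE, fun hxX => hx ⟨hxX, hxw⟩⟩
    · rintro ⟨hxE, hxX⟩
      exact ⟨⟨hxE, fun h => hxX (h ▸ hw.1)⟩, fun h => hxX h.1⟩
  have hXne' : (X \ {w}).Nonempty := ⟨x₀, hx₀, fun h => hw.2 (h ▸ rfl)⟩
  have hYne : (M.E \ X).Nonempty := nonempty_of_ncard_ne_zero (by omega)
  have hXwcard : (X \ {w}).ncard = n - 1 ∧ 1 ≤ n := by
    constructor
    · rw [ncard_diff_singleton_of_mem hw.1, hXn]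
    · have : X.Nonempty := ⟨x₀, hx₀⟩
      have := (ncard_eq_zero (hEfin.subset hXE)).not.mpr this.ne_empty
      omega
  rcases tutte M hconn hEcard hwE with hdel | hcon
  · -- use M \ w
    haveI hfin' := delete_finite (M := M) {w}
    have hrkXw : rk M (X \ {w}) = rk M X := by
      have h1 : rk M X ≤ rk M (X \ {w}) + 1 := by
        have h2 := rk_insert_le M (X \ {w}) w
        have : X ⊆ insert w (X \ {w}) := by
          intro x hx
          rcases em (x = w) with h | h
          · exact Or.inl h
          · exact Or.inr ⟨hx, h⟩
        have := rk_mono (M := M) this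
        omega
      have h3 : rk M (X \ {w}) ≤ rk M X := rk_mono diff_subset
      -- if rk drops, we get a 1-separation of M \ w
      by_contra hne
      have hdrop : rk M (X \ {w}) + 1 = rk M X := by omega
      have hlamw : lam (delete M {w}) (X \ {w}) ≤ 0 := by
        rw [lam_delete_singleton M hXw, hYw]
        push_cast
        omega
      have : ¬ Connected (delete M {w}) := by
        intro hcc
        have := one_le_lam_of_connected hcc (X := X \ {w})
          (by rw [delete_ground]; exact hXw) hXne'
          (by rw [delete_ground, hYw]; exact hYne)
        omega
      exact this hdel
    have hlam' : lam (delete M {w}) (X \ {w}) = 1 := by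
      rw [lam_delete_singleton M hXw, hYw, hrkXw, hwrk']
      rw [lam_eq] at hlam
      push_cast at hlam ⊢
      omega
    obtain ⟨C, hC, h1, h2⟩ := IH (n-1) (by omega) (delete M {w}) hfin'
      hdel (X \ {w}) x₀ (by rw [delete_ground]; exact hXw) hXwcard.1 hlam'
      ⟨hx₀, fun h => hw.2 (h ▸ rfl)⟩
      (by rw [delete_ground, hYw]; exact hY2)
    rw [delete_ground, hYw] at h2
    have hCE : C ⊆ M.E \ {w} := hC.trans (diff_subset.trans hXw)
    have hr1 : rk (delete M {w}) (C ∪ {x₀}) = rk M (C ∪ {x₀}) :=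
      rk_delete_eq _ (union_subset hCE (singleton_subset_iff.mpr
        ⟨hXE hx₀, fun h => hw.2 (h ▸ rfl)⟩))
    have hr2 : rk (delete M {w}) C = rk M C := rk_delete_eq _ hCE
    have hr3 : rk (delete M {w}) ((C ∪ (M.E \ X)) ∪ {x₀}) = rk M ((C ∪ (M.E \ X)) ∪ {x₀}) := by
      refine rk_delete_eq _ (union_subset (union_subset hCE ?_) (singleton_subset_iff.mpr
        ⟨hXE hx₀, fun h => hw.2 (h ▸ rfl)⟩))
      intro x hx
      exact ⟨hx.1, fun h => hx.2 (h ▸ hw.1)⟩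
    have hr4 : rk (delete M {w}) (C ∪ (M.E \ X)) = rk M (C ∪ (M.E \ X)) := by
      refine rk_delete_eq _ (union_subset hCE ?_)
      intro x hx
      exact ⟨hx.1, fun h => hx.2 (h ▸ hw.1)⟩
    refine ⟨C, ?_, ?_, ?_⟩
    · exact hC.trans (diff_subset_diff_left diff_subset)
    · rw [hr1, hr2] at h1; exact h1
    · rw [hr3, hr4] at h2; exact h2
  · -- use M / w
    haveI hfin' := contract_finite (M := M) {w}
    have hYwu : rk M ((M.E \ X) ∪ {w}) = rk M (M.E \ X) + 1 := by
      have hle := rk_union_singleton_le M (M.E \ X) w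
      by_contra hne
      have heq : rk M ((M.E \ X) ∪ {w}) = rk M (M.E \ X) := by
        have := rk_mono (M := M) (subset_union_left (s := M.E \ X) (t := {w}))
        omega
      have hlamw : lam (contract M {w}) (X \ {w}) ≤ 0 := by
        rw [lam_contract_singleton M hwE hXw]
        have hXwu : (X \ {w}) ∪ {w} = X := by
          rw [diff_union_self, union_eq_self_of_subset_right
            (singleton_subset_iff.mpr hw.1)]
        have hEXw : M.E \ (X \ {w}) = (M.E \ X) ∪ {w} := by
          ext x
          simp only [mem_diff, mem_union, mem_singleton_iff]
          constructor
          · rintro ⟨hxE, hx⟩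
            rcases em (x = w) with h | h
            · exact Or.inr h
            · exact Or.inl ⟨hxE, fun hxX => hx ⟨hxX, h⟩⟩
          · rintro (⟨hxE, hxX⟩ | rfl)
            · exact ⟨hxE, fun h => hxX h.1⟩
            · exact ⟨hwE, fun h => h.2 rfl⟩
        rw [hXwu, hEXw, heq, hwrk]
        push_cast
        omega
      have : ¬ Connected (contract M {w}) := by
        intro hcc
        have := one_le_lam_of_connected hcc (X := X \ {w})
          (by rw [contract_ground]; exact hXw) hXne'
          (by rw [contract_ground, hYw]; exact hYne)
        omega
      exact this hcon
    have hlam' : lam (contract M {w}) (X \ {w}) = 1 := by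
      rw [lam_contract_singleton M hwE hXw]
      have hXwu : (X \ {w}) ∪ {w} = X := by
        rw [diff_union_self, union_eq_self_of_subset_right (singleton_subset_iff.mpr hw.1)]
      have hEXw : M.E \ (X \ {w}) = (M.E \ X) ∪ {w} := by
        ext x
        simp only [mem_diff, mem_union, mem_singleton_iff]
        constructor
        · rintro ⟨hxE, hx⟩
          rcases em (x = w) with h | h
          · exact Or.inr h
          · exact Or.inl ⟨hxE, fun hxX => hx ⟨hxX, h⟩⟩
        · rintro (⟨hxE, hxX⟩ | rfl)
          · exact ⟨hxE, fun h => hxX h.1⟩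
          · exact ⟨hwE, fun h => h.2 rfl⟩
      rw [hXwu, hEXw, hYwu, hwrk]
      push_cast
      omega
    obtain ⟨C, hC, h1, h2⟩ := IH (n-1) (by omega) (contract M {w}) hfin'
      hcon (X \ {w}) x₀ (by rw [contract_ground]; exact hXw) hXwcard.1 hlam'
      ⟨hx₀, fun h => hw.2 (h ▸ rfl)⟩
      (by rw [contract_ground, hYw]; exact hY2)
    rw [contract_ground, hYw] at h2
    have hCE : C ⊆ M.E \ {w} := hC.trans (diff_subset.trans hXw)
    have hwsub : {w} ⊆ M.E := singleton_subset_iff.mpr hwE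
    have hr1 : rk (contract M {w}) (C ∪ {x₀}) + 1 = rk M ((C ∪ {x₀}) ∪ {w}) := by
      have := rk_contract_add M hwsub (A := C ∪ {x₀})
        (union_subset hCE (singleton_subset_iff.mpr ⟨hXE hx₀, fun h => hw.2 (h ▸ rfl)⟩))
      rwa [hwrk] at this
    have hr2 : rk (contract M {w}) C + 1 = rk M (C ∪ {w}) := by
      have := rk_contract_add M hwsub (A := C) hCE
      rwa [hwrk] at this
    have hr3 : rk (contract M {w}) ((C ∪ (M.E \ X)) ∪ {x₀}) + 1 =
        rk M (((C ∪ (M.E \ X)) ∪ {x₀}) ∪ {w}) := by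
      have hsub : (C ∪ (M.E \ X)) ∪ {x₀} ⊆ M.E \ {w} := by
        refine union_subset (union_subset hCE ?_) (singleton_subset_iff.mpr
          ⟨hXE hx₀, fun h => hw.2 (h ▸ rfl)⟩)
        intro x hx
        exact ⟨hx.1, fun h => hx.2 (h ▸ hw.1)⟩
      have := rk_contract_add M hwsub hsub
      rwa [hwrk] at this
    have hr4 : rk (contract M {w}) (C ∪ (M.E \ X)) + 1 = rk M ((C ∪ (M.E \ X)) ∪ {w}) := by
      have hsub : C ∪ (M.E \ X) ⊆ M.E \ {w} := by
        refine union_subset hCE ?_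
        intro x hx
        exact ⟨hx.1, fun h => hx.2 (h ▸ hw.1)⟩
      have := rk_contract_add M hwsub hsub
      rwa [hwrk] at this
    refine ⟨C ∪ {w}, ?_, ?_, ?_⟩
    · refine union_subset (hC.trans ?_) (singleton_subset_iff.mpr ⟨hw.1, hw.2⟩)
      exact diff_subset_diff_left diff_subset
    · have e1 : (C ∪ {x₀}) ∪ {w} = (C ∪ {w}) ∪ {x₀} := by
        rw [union_assoc, union_assoc, union_comm {x₀} {w}]
      rw [← e1, ← hr1]
      rw [← hr2]
      omega
    · have e2 : ((C ∪ (M.E \ X)) ∪ {x₀}) ∪ {w} = (((C ∪ {w}) ∪ (M.E \ X)) ∪ {x₀}) := by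
        ext x; simp only [mem_union, mem_singleton_iff]; tauto
      have e3 : (C ∪ (M.E \ X)) ∪ {w} = (C ∪ {w}) ∪ (M.E \ X) := by
        ext x; simp only [mem_union, mem_singleton_iff]; tauto
      rw [← e2, ← hr3, ← e3, ← hr4]
      omega

end NDP
namespace NDP

variable {α : Type*} {M : Matroid α}

open Set Matroid

lemma piece_rk (M : Matroid α) [M.Finite] {C₁ D₁ A : Set α} (hC : C₁ ⊆ M.E)
    (hA : A ⊆ (M.E \ C₁) \ D₁) :
    rk (delete (contract M C₁) D₁) A + rk M C₁ = rk M (A ∪ C₁) := by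
  haveI := contract_finite (M := M) C₁
  have h1 : rk (delete (contract M C₁) D₁) A = rk (contract M C₁) A := rk_delete_eq _ hA
  rw [h1]
  exact rk_contract_add M hC (hA.trans diff_subset)

lemma minor_chain (M : Matroid α) [M.Finite] {C1 C2 D1 D2 : Set α}
    (hC1 : C1 ⊆ M.E) (hC2 : C2 ⊆ M.E) (hD1 : D1 ⊆ M.E)
    (h21 : Disjoint C2 C1) (hD1C1 : Disjoint D1 C1) (hC2D1 : Disjoint C2 D1) :
    delete (contract M (C1 ∪ C2)) (D1 ∪ D2) =
      delete (contract (delete (contract M C1) D1) C2) D2 := by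
  haveI := contract_finite (M := M) C1
  rw [← contract_contract, ← delete_delete]
  congr 1
  refine delete_contract_comm (contract M C1) ?_ ?_ hC2D1
  · rw [contract_ground]; exact subset_diff.mpr ⟨hC2, h21⟩
  · rw [contract_ground]; exact subset_diff.mpr ⟨hD1, hD1C1⟩

/-- A matroid with at most one element is an iso-minor of any connected matroid
with at least two elements. -/
lemma small_minor (M' N : Matroid α) [M'.Finite] [N.Finite] (hconn : Connected M')
    (hcard : 2 ≤ M'.E.ncard) (hN : N.E.ncard ≤ 1) : IsoMinor M' N := by
  rcases Nat.le_one_iff_eq_zero_or_eq_one.mp hN with h0 | h1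
  · -- N is the empty matroid
    have hNE : N.E = ∅ := (ncard_eq_zero N.ground_finite).mp h0
    refine ⟨id, injOn_id _, ?_⟩
    rw [map_id]
    refine ⟨∅, M'.E, ?_⟩
    have h1 : (delete (contract M' ∅) M'.E).E = ∅ := by
      rw [delete_ground, contract_ground, diff_empty, diff_self]
    rw [ground_eq_empty_iff.mp hNE, ground_eq_empty_iff.mp h1]
  · obtain ⟨b, hb⟩ := ncard_eq_one.mp h1
    obtain ⟨e, he⟩ : M'.E.Nonempty := nonempty_of_ncard_ne_zero (by omega)
    obtain ⟨he1, he2⟩ := conn_elem hconn hcard he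
    set f : α → α := fun _ => e with hf
    have hfinj : InjOn f N.E := fun x _ y _ _ => by
      rw [hb] at *; simp_all [mem_singleton_iff]
    haveI := map_finite hfinj
    have hmapE : (N.map f hfinj).E = {e} := by
      rw [map_ground, hb, image_singleton]
    have hrkmap : rk (N.map f hfinj) {e} = rk N N.E := by
      have : ({e} : Set α) = f '' {b} := by rw [image_singleton]
      rw [this, rk_map_image hfinj (by rw [hb]), ← hb]
    have hrkN : rk N N.E ≤ 1 := by
      have := rk_le_ncard (M := N) Subset.rfl
      omega
    have hesub : ({e} : Set α) ⊆ M'.E := singleton_subset_iff.mpr he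
    rcases Nat.le_one_iff_eq_zero_or_eq_one.mp hrkN with hr | hr
    · -- N is a single loop : contract everything else
      refine ⟨f, hfinj, M'.E \ {e}, ∅, ?_⟩
      haveI := contract_finite (M := M') (M'.E \ {e})
      haveI := delete_finite (M := contract M' (M'.E \ {e})) (∅ : Set α)
      refine eq_of_rk_eq ?_ ?_
      · rw [hmapE, delete_ground, contract_ground, diff_empty,
          diff_diff_cancel_left hesub]
      · intro A hA
        rw [hmapE] at hA
        rcases subset_singleton_iff_eq.mp hA with rfl | rfl
        · rw [rk_empty, rk_empty]
        · rw [hrkmap, hr]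
          have hp := piece_rk M' (C₁ := M'.E \ {e}) (D₁ := (∅ : Set α)) (A := {e})
            diff_subset (by rw [diff_diff_cancel_left hesub, diff_empty])
          rw [union_diff_cancel hesub] at hp
          omega
    · -- N is a single coloop : delete everything else
      refine ⟨f, hfinj, ∅, M'.E \ {e}, ?_⟩
      haveI := contract_finite (M := M') (∅ : Set α)
      haveI := delete_finite (M := contract M' ∅) (M'.E \ {e})
      refine eq_of_rk_eq ?_ ?_
      · rw [hmapE, delete_ground, contract_ground, diff_empty,
          diff_diff_cancel_left hesub]
      · intro A hA
        rw [hmapE] at hA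
        rcases subset_singleton_iff_eq.mp hA with rfl | rfl
        · rw [rk_empty, rk_empty]
        · rw [hrkmap, hr]
          have hp := piece_rk M' (C₁ := (∅ : Set α)) (D₁ := M'.E \ {e}) (A := {e})
            (empty_subset _) (by rw [diff_empty, diff_diff_cancel_left hesub])
          rw [union_empty, rk_empty, he1] at hp
          omega

/-! ### Duality transfer -/

lemma dual_delete (M : Matroid α) (D : Set α) : (delete M D)✶ = contract M✶ D := by
  unfold contract
  rw [dual_dual]

lemma dual_contract (M : Matroid α) (C : Set α) : (contract M C)✶ = delete M✶ C := by
  unfold contract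
  rw [dual_dual]

lemma minor_dual {N : Matroid α} [M.Finite] (h : Minor N M) : Minor N✶ M✶ := by
  obtain ⟨C, D, hCE, hDE, hCD, -, -, -, rfl⟩ := minor_normalize h
  haveI : M✶.Finite := inferInstance
  rw [dual_delete, dual_contract]
  refine ⟨D, C, ?_⟩
  exact (delete_contract_comm M✶ (C := D) (D := C) hDE hCE hCD.symm).symm

lemma map_congr {N N' : Matroid α} (h : N = N') {f : α → α} (hf : InjOn f N.E) :
    N.map f hf = N'.map f (h ▸ hf) := by
  subst h; rfl

lemma lam_compl (M : Matroid α) {X : Set α} (hX : X ⊆ M.E) :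
    lam M (M.E \ X) = lam M X := by
  rw [lam_eq, lam_eq, diff_diff_cancel_left hX]
  ring

end NDP
namespace NDP

variable {α : Type*} {M : Matroid α}

open Set Matroid

lemma crux_contract (M N : Matroid α) [M.Finite] (hconn : Connected M)
    (hN3 : ThreeConnected N) (X : Set α) (hXE : X ⊆ M.E) (hX2 : 2 ≤ X.ncard)
    (hY2 : 2 ≤ (M.E \ X).ncard) (hlam : lam M X = 1) (hmin : Minor N M)
    (hXN : (X ∩ N.E).ncard ≤ 1) {u : α} (hu : u ∈ X)
    (hMu : Connected (contract M {u})) : IsoMinor (contract M {u}) N := by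
  classical
  haveI hNfin := minor_finite hmin
  haveI hMufin := contract_finite (M := M) {u}
  have hEfin := M.ground_finite
  have hl := lamN hlam
  have huE := hXE hu
  have hYE : M.E \ X ⊆ M.E := diff_subset
  have hEsum : (M.E \ X).ncard + X.ncard = M.E.ncard :=
    ncard_diff_add_ncard_of_subset hXE hEfin
  have hEcard : 4 ≤ M.E.ncard := by omega
  obtain ⟨hurk, hurk'⟩ := conn_elem hconn (by omega) huE
  have hMuE : (contract M {u}).E = M.E \ {u} := contract_ground M {u}
  have hXu : X \ {u} ⊆ M.E \ {u} := diff_subset_diff_left hXE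
  have id1 : (X \ {u}) ∪ {u} = X := by
    rw [diff_union_self, union_eq_self_of_subset_right (singleton_subset_iff.mpr hu)]
  have id2 : M.E \ (X \ {u}) = (M.E \ X) ∪ {u} := by
    ext x
    simp only [mem_diff, mem_union, mem_singleton_iff]
    constructor
    · rintro ⟨hxE, hx⟩
      rcases em (x = u) with h | h
      · exact Or.inr h
      · exact Or.inl ⟨hxE, fun hxX => hx ⟨hxX, h⟩⟩
    · rintro (⟨hxE, hxX⟩ | rfl)
      · exact ⟨hxE, fun h => hxX h.1⟩
      · exact ⟨huE, fun h => h.2 rfl⟩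
  have id3 : (M.E \ {u}) \ (X \ {u}) = M.E \ X := by
    ext x
    simp only [mem_diff, mem_singleton_iff]
    constructor
    · rintro ⟨⟨hxE, hxu⟩, hx⟩
      exact ⟨hxE, fun hxX => hx ⟨hxX, hxu⟩⟩
    · rintro ⟨hxE, hxX⟩
      exact ⟨⟨hxE, fun h => hxX (h ▸ hu)⟩, fun h => hxX h.1⟩
  have hXune : (X \ {u}).Nonempty := by
    refine nonempty_of_ncard_ne_zero ?_
    rw [ncard_diff_singleton_of_mem hu]
    omega
  have hYne : (M.E \ X).Nonempty := nonempty_of_ncard_ne_zero (by omega)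
  have hYuE : M.E \ X ⊆ M.E \ {u} :=
    fun x hx => ⟨hx.1, fun h => hx.2 (h ▸ hu)⟩
  -- r(Y ∪ {u}) = r(Y) + 1 and lam of the contraction
  have hlamMu0 := one_le_lam_of_connected hMu (X := X \ {u})
    (by rw [hMuE]; exact hXu) hXune (by rw [hMuE, id3]; exact hYne)
  have hYu : rk M ((M.E \ X) ∪ {u}) = rk M (M.E \ X) + 1 := by
    have h := hlamMu0
    rw [lam_contract_singleton M huE hXu, id1, id2, hurk] at h
    have hle := rk_union_singleton_le M (M.E \ X) u
    have hmono : rk M (M.E \ X) ≤ rk M ((M.E \ X) ∪ {u}) := rk_mono subset_union_left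
    push_cast at h
    omega
  have hlamMu1 : lam (contract M {u}) (X \ {u}) = 1 := by
    rw [lam_contract_singleton M huE hXu, id1, id2, hurk, hYu]
    push_cast
    omega
  -- rank transfer from M/u to M for subsets of Y
  have hrktrans : ∀ A, A ⊆ M.E \ X → rk (contract M {u}) A = rk M A := by
    intro A hA
    have h1 : rk (contract M {u}) A + rk M {u} = rk M (A ∪ {u}) :=
      rk_contract_add M (singleton_subset_iff.mpr huE) (hA.trans hYuE)
    have hd := rk_diminishing M (A := A) (B := M.E \ X) {u} hA
    have hle := rk_union_singleton_le M A u
    rw [hurk] at h1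
    omega
  -- dispatch the degenerate case
  by_cases hsmall : N.E.ncard ≤ 1
  · refine small_minor _ _ hMu ?_ hsmall
    rw [hMuE, ncard_diff_singleton_of_mem huE]
    omega
  push_neg at hsmall
  -- normalize the minor
  obtain ⟨C, D, hCE, hDE, hCD, hCN, hDN, hcover, hNdef⟩ := minor_normalize hmin
  have hNE : N.E = (M.E \ C) \ D := by rw [hNdef]; rfl
  have hNEY : N.E \ X ⊆ M.E \ X := diff_subset_diff_left (minor_ground hmin)
  set C_X := C ∩ X with hCXdef
  set C_Y := C ∩ (M.E \ X) with hCYdef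
  set D_X := D ∩ X with hDXdef
  set D_Y := D ∩ (M.E \ X) with hDYdef
  have hCun : C_X ∪ C_Y = C := by
    rw [hCXdef, hCYdef]
    ext x
    simp only [mem_union, mem_inter_iff, mem_diff]
    constructor
    · rintro (⟨h, -⟩ | ⟨h, -⟩) <;> exact h
    · intro hx
      rcases em (x ∈ X) with h | h
      · exact Or.inl ⟨hx, h⟩
      · exact Or.inr ⟨hx, hCE hx, h⟩
  have hDun : D_X ∪ D_Y = D := by
    rw [hDXdef, hDYdef]
    ext x
    simp only [mem_union, mem_inter_iff, mem_diff]
    constructor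
    · rintro (⟨h, -⟩ | ⟨h, -⟩) <;> exact h
    · intro hx
      rcases em (x ∈ X) with h | h
      · exact Or.inl ⟨hx, h⟩
      · exact Or.inr ⟨hx, hDE hx, h⟩
  have hCXX : C_X ⊆ X := inter_subset_right
  have hCXC : C_X ⊆ C := inter_subset_left
  have hCYY : C_Y ⊆ M.E \ X := inter_subset_right
  have hCYC : C_Y ⊆ C := inter_subset_left
  have hDXX : D_X ⊆ X := inter_subset_right
  have hDXD : D_X ⊆ D := inter_subset_left
  have hDYY : D_Y ⊆ M.E \ X := inter_subset_right
  have hDYD : D_Y ⊆ D := inter_subset_left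
  have hCXE : C_X ⊆ M.E := hCXC.trans hCE
  have hCYE : C_Y ⊆ M.E := hCYC.trans hCE
  have hDXE : D_X ⊆ M.E := hDXD.trans hDE
  have hDYE : D_Y ⊆ M.E := hDYD.trans hDE
  have hdCYCX : Disjoint C_Y C_X := disjoint_of_subset hCYY hCXX disjoint_sdiff_left
  have hdDXCX : Disjoint D_X C_X := hCD.symm.mono hDXD hCXC
  have hdCYDX : Disjoint C_Y D_X := hCD.mono hCYC hDXD
  have hdDYCY : Disjoint D_Y C_Y := hCD.symm.mono hDYD hCYC
  have hdCYN : Disjoint C_Y N.E := hCN.mono_left hCYC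
  have hdDYN : Disjoint D_Y N.E := hDN.mono_left hDYD
  have hXcov : ∀ x ∈ X, x ∈ C_X ∨ x ∈ D_X ∨ x ∈ N.E := by
    intro x hx
    have hxE := hXE hx
    rw [← hcover] at hxE
    rcases hxE with h | h | h
    · exact Or.inl ⟨h, hx⟩
    · exact Or.inr (Or.inl ⟨h, hx⟩)
    · exact Or.inr (Or.inr h)
  clear_value C_X C_Y D_X D_Y
  -- the X-side piece K
  set K := delete (contract M C_X) D_X with hKdef
  haveI hKfin : K.Finite := by
    haveI := contract_finite (M := M) C_X
    rw [hKdef]; exact delete_finite _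
  have hKE : K.E = (M.E \ C_X) \ D_X := by rw [hKdef]; rfl
  have chainK : N = delete (contract K C_Y) D_Y := by
    rw [hNdef, ← hCun, ← hDun, hKdef]
    exact minor_chain M hCXE hCYE hDXE hdCYCX hdDXCX hdCYDX
  have hrkK : ∀ S, S ⊆ K.E → rk K S + rk M C_X = rk M (S ∪ C_X) := by
    intro S hS
    rw [hKdef]
    refine piece_rk M hCXE ?_
    rw [hKE] at hS
    exact hS
  have hrkN : ∀ S, S ⊆ N.E → rk N S + rk K C_Y = rk K (S ∪ C_Y) := by
    intro S hS
    rw [chainK]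
    refine piece_rk K ?_ ?_
    · rw [hKE]
      intro x hx
      exact ⟨⟨hCYE hx, fun hc => hdCYCX.ne_of_mem hx hc rfl⟩,
        fun hc => hdCYDX.ne_of_mem hx hc rfl⟩
    · rw [chainK] at hS
      exact hS
  -- helper to conclude from a representation of N over M/u
  have hfinish : ∀ C₀ D₀ : Set α, C₀ ⊆ (contract M {u}).E → D₀ ⊆ (contract M {u}).E →
      Disjoint C_Y C₀ → Disjoint D₀ C₀ → Disjoint C_Y D₀ →
      N = delete (contract (delete (contract (contract M {u}) C₀) D₀) C_Y) D_Y →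
      IsoMinor (contract M {u}) N := by
    intro C₀ D₀ h1 h2 h3 h4 h5 heq
    refine ⟨id, injOn_id _, ?_⟩
    rw [map_id]
    refine ⟨C₀ ∪ C_Y, D₀ ∪ D_Y, ?_⟩
    have hCY2 : C_Y ⊆ (contract M {u}).E := by
      rw [hMuE]; exact hCYY.trans hYuE
    rw [minor_chain (contract M {u}) h1 hCY2 h2 h3 h4 h5]
    exact heq
  have hCYdisjYc : Disjoint C_Y ((contract M {u}).E \ (M.E \ X)) :=
    Set.disjoint_left.mpr fun x hx hx2 => hx2.2 (hCYY hx)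
  -- case analysis on whether N meets X
  by_cases hX0 : X ∩ N.E = ∅
  · -- Case A : N lives inside Y
    have hKEY : K.E = M.E \ X := by
      rw [hKE]
      ext x
      simp only [mem_diff]
      constructor
      · rintro ⟨⟨hxE, hxC⟩, hxD⟩
        refine ⟨hxE, fun hxX => ?_⟩
        rcases hXcov x hxX with h | h | h
        · exact hxC h
        · exact hxD h
        · exact (eq_empty_iff_forall_notMem.mp hX0 x) ⟨hxX, h⟩
      · rintro ⟨hxE, hxX⟩
        exact ⟨⟨hxE, fun h => hxX (hCXX h)⟩, fun h => hxX (hDXX h)⟩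
    have hYMu : M.E \ X ⊆ (contract M {u}).E := by rw [hMuE]; exact hYuE
    rcases conn_dichotomy M hXE hlam hCXX with hskew | hns
    · -- skew case : K is the deletion piece
      have hKr : ∀ S, S ⊆ M.E \ X → rk K S = rk M S := by
        intro S hS
        have h1 := hrkK S (by rw [hKEY]; exact hS)
        have h2 := skew_prop M hXE hCXX hS hskew
        omega
      set K' := delete (contract (contract M {u}) ∅) ((contract M {u}).E \ (M.E \ X))
        with hK'def
      haveI : (contract (contract M {u}) ∅).Finite := contract_finite _
      haveI hK'fin : K'.Finite := by rw [hK'def]; exact delete_finite _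
      have hK'E : K'.E = M.E \ X := by
        rw [hK'def, delete_ground, contract_ground, diff_empty, diff_diff_cancel_left hYMu]
      have hK'r : ∀ S, S ⊆ M.E \ X → rk K' S = rk M S := by
        intro S hS
        have h1 : rk K' S + rk (contract M {u}) ∅ = rk (contract M {u}) (S ∪ ∅) := by
          rw [hK'def]
          refine piece_rk (contract M {u}) (empty_subset _) ?_
          rw [diff_empty, diff_diff_cancel_left hYMu]
          exact hS
        rw [union_empty, rk_empty, hrktrans S hS] at h1
        omega
      have hKK' : K = K' := by
        refine eq_of_rk_eq (by rw [hKEY, hK'E]) ?_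
        intro A hA
        rw [hKEY] at hA
        rw [hKr A hA, hK'r A hA]
      refine hfinish ∅ ((contract M {u}).E \ (M.E \ X)) (empty_subset _) diff_subset
        (disjoint_empty _) (disjoint_empty _) hCYdisjYc ?_
      rw [chainK, hKK', hK'def]
    · -- non-skew case : K is the contraction piece
      have hKr : ∀ S, S ⊆ M.E \ X → rk K S + rk M X = rk M (S ∪ X) := by
        intro S hS
        have h1 := hrkK S (by rw [hKEY]; exact hS)
        have h2 := nonskew_prop M hXE hlam hCXX hS hns
        omega
      set K' := delete (contract (contract M {u}) (X \ {u})) (∅ : Set α) with hK'def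
      haveI : (contract (contract M {u}) (X \ {u})).Finite := contract_finite _
      haveI hK'fin : K'.Finite := by rw [hK'def]; exact delete_finite _
      have hXuMu : X \ {u} ⊆ (contract M {u}).E := by rw [hMuE]; exact hXu
      have hgr : ((contract M {u}).E \ (X \ {u})) \ (∅ : Set α) = M.E \ X := by
        rw [diff_empty, hMuE, id3]
      have hK'E : K'.E = M.E \ X := by
        rw [hK'def, delete_ground, contract_ground]
        exact hgr
      have hK'r : ∀ S, S ⊆ M.E \ X → rk K' S + rk M X = rk M (S ∪ X) := by
        intro S hS
        have h1 : rk K' S + rk (contract M {u}) (X \ {u}) =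
            rk (contract M {u}) (S ∪ (X \ {u})) := by
          rw [hK'def]
          refine piece_rk (contract M {u}) hXuMu ?_
          rw [hgr]
          exact hS
        have h2 : rk (contract M {u}) (X \ {u}) + rk M {u} = rk M X := by
          have := rk_contract_add M (singleton_subset_iff.mpr huE) hXu
          rwa [id1] at this
        have h3 : rk (contract M {u}) (S ∪ (X \ {u})) + rk M {u} = rk M (S ∪ X) := by
          have hsub : S ∪ (X \ {u}) ⊆ M.E \ {u} :=
            union_subset (hS.trans hYuE) hXu
          have := rk_contract_add M (singleton_subset_iff.mpr huE) hsub
          rwa [show (S ∪ (X \ {u})) ∪ {u} = S ∪ X by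
            ext x; simp only [mem_union, mem_diff, mem_singleton_iff]
            constructor
            · rintro ((h | ⟨h, -⟩) | rfl)
              · exact Or.inl h
              · exact Or.inr h
              · exact Or.inr hu
            · rintro (h | h)
              · exact Or.inl (Or.inl h)
              · rcases em (x = u) with he | he
                · exact Or.inr he
                · exact Or.inl (Or.inr ⟨h, he⟩)] at this
        rw [hurk] at h2 h3
        omega
      have hKK' : K = K' := by
        refine eq_of_rk_eq (by rw [hKEY, hK'E]) ?_
        intro A hA
        rw [hKEY] at hA
        have := hKr A hA
        have := hK'r A hA
        omega
      refine hfinish (X \ {u}) ∅ hXuMu (empty_subset _)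
        (Set.disjoint_left.mpr fun x hx hx2 => (hCYY hx).2 hx2.1)
        (disjoint_empty _).symm (disjoint_empty _) ?_
      rw [chainK, hKK', hK'def]
  · -- Case B : N meets X in exactly one element x₀
    have hXN1 : (X ∩ N.E).ncard = 1 := by
      have h0 : 0 < (X ∩ N.E).ncard :=
        (ncard_pos (hEfin.subset (inter_subset_left.trans hXE))).mpr
          (nonempty_iff_ne_empty.mpr hX0)
      omega
    obtain ⟨x₀, hx₀⟩ := ncard_eq_one.mp hXN1
    have hx₀XN : x₀ ∈ X ∩ N.E := by rw [hx₀]; exact rfl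
    have hx₀X : x₀ ∈ X := hx₀XN.1
    have hx₀N : x₀ ∈ N.E := hx₀XN.2
    have hx₀E : x₀ ∈ M.E := hXE hx₀X
    have hCXx : C_X ⊆ X \ {x₀} := fun x hx =>
      ⟨hCXX hx, fun he => hCN.ne_of_mem (hCXC hx) (he ▸ hx₀N) rfl⟩
    have hDXx : D_X ⊆ X \ {x₀} := fun x hx =>
      ⟨hDXX hx, fun he => hDN.ne_of_mem (hDXD hx) (he ▸ hx₀N) rfl⟩
    have hNsubY : N.E \ {x₀} ⊆ M.E \ X := by
      intro x hx
      refine ⟨minor_ground hmin hx.1, fun hxX => hx.2 ?_⟩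
      have : x ∈ X ∩ N.E := ⟨hxX, hx.1⟩
      rw [hx₀] at this
      exact this
    have hKEYx : K.E = (M.E \ X) ∪ {x₀} := by
      rw [hKE]
      ext x
      simp only [mem_diff, mem_union, mem_singleton_iff]
      constructor
      · rintro ⟨⟨hxE, hxC⟩, hxD⟩
        rcases em (x ∈ X) with hxX | hxX
        · rcases hXcov x hxX with h | h | h
          · exact absurd h hxC
          · exact absurd h hxD
          · refine Or.inr ?_
            have hmem : x ∈ X ∩ N.E := ⟨hxX, h⟩
            rw [hx₀] at hmem
            exact hmem
        · exact Or.inl ⟨hxE, hxX⟩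
      · rintro (⟨hxE, hxX⟩ | rfl)
        · exact ⟨⟨hxE, fun h => hxX (hCXX h)⟩, fun h => hxX (hDXX h)⟩
        · exact ⟨⟨hx₀E, fun h => (hCXx h).2 rfl⟩, fun h => (hDXx h).2 rfl⟩
    -- rank of N in terms of M
    have hrkNM : ∀ S, S ⊆ N.E →
        rk N S + rk M (C_Y ∪ C_X) = rk M ((S ∪ C_Y) ∪ C_X) := by
      intro S hS
      have hSK : S ∪ C_Y ⊆ K.E := by
        rw [hKEYx]
        refine union_subset ?_ (hCYY.trans subset_union_left)
        intro x hx
        rcases em (x = x₀) with h | h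
        · exact Or.inr h
        · exact Or.inl (hNsubY ⟨hS hx, h⟩)
      have h1 := hrkN S hS
      have h2 := hrkK (S ∪ C_Y) hSK
      have h3 := hrkK C_Y (by rw [hKEYx]; exact hCYY.trans subset_union_left)
      omega
    -- lam N {x₀} ≥ 1
    have hNx : rk N {x₀} = 1 ∧ rk N (N.E \ {x₀}) = rk N N.E := by
      have hlamNx : ¬ lam N {x₀} ≤ 0 := by
        intro hle
        refine hN3 1 (by omega) {x₀} ⟨⟨singleton_subset_iff.mpr hx₀N, by push_cast; omega⟩,
          by simp, ?_⟩
        rw [ncard_diff_singleton_of_mem hx₀N]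
        omega
      rw [lam_eq] at hlamNx
      push_neg at hlamNx
      have hb1 : rk N {x₀} ≤ 1 := by
        have := rk_le_ncard (M := N) (singleton_subset_iff.mpr hx₀N)
        simpa using this
      have hb2 : rk N (N.E \ {x₀}) ≤ rk N N.E := rk_ground_le_of_subset
      constructor <;> omega
    -- the piece conditions in M
    have hnl : rk M (C_X ∪ {x₀}) = rk M C_X + 1 := by
      have h1 := hrkNM {x₀} (singleton_subset_iff.mpr hx₀N)
      rw [hNx.1] at h1
      have hd := rk_diminishing M (A := C_X) (B := C_Y ∪ C_X) {x₀} subset_union_right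
      have hle := rk_union_singleton_le M C_X x₀
      have hid : ({x₀} ∪ C_Y) ∪ C_X = (C_Y ∪ C_X) ∪ {x₀} := by
        ext x; simp only [mem_union, mem_singleton_iff]; tauto
      rw [hid] at h1
      omega
    have hncl : rk M ((C_X ∪ (M.E \ X)) ∪ {x₀}) = rk M (C_X ∪ (M.E \ X)) := by
      have h1 := hrkNM (N.E \ {x₀}) diff_subset
      have h2 := hrkNM N.E Subset.rfl
      rw [hNx.2] at h1
      have hid : (N.E ∪ C_Y) ∪ C_X = (((N.E \ {x₀}) ∪ C_Y) ∪ C_X) ∪ {x₀} := by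
        ext x
        simp only [mem_union, mem_diff, mem_singleton_iff]
        constructor
        · rintro ((h | h) | h)
          · rcases em (x = x₀) with he | he
            · exact Or.inr he
            · exact Or.inl (Or.inl (Or.inl ⟨h, he⟩))
          · exact Or.inl (Or.inl (Or.inr h))
          · exact Or.inl (Or.inr h)
        · rintro (((⟨h, -⟩ | h) | h) | rfl)
          · exact Or.inl (Or.inl h)
          · exact Or.inl (Or.inr h)
          · exact Or.inr h
          · exact Or.inl (Or.inl hx₀N)
      have hSx : rk M ((((N.E \ {x₀}) ∪ C_Y) ∪ C_X) ∪ {x₀}) =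
          rk M (((N.E \ {x₀}) ∪ C_Y) ∪ C_X) := by
        rw [← hid]; omega
      have hSsub : ((N.E \ {x₀}) ∪ C_Y) ∪ C_X ⊆ C_X ∪ (M.E \ X) := by
        refine union_subset (union_subset ?_ ?_) subset_union_left
        · exact hNsubY.trans subset_union_right
        · exact hCYY.trans subset_union_right
      have hd := rk_diminishing M (A := ((N.E \ {x₀}) ∪ C_Y) ∪ C_X)
        (B := C_X ∪ (M.E \ X)) {x₀} hSsub
      have hmono : rk M (C_X ∪ (M.E \ X)) ≤ rk M ((C_X ∪ (M.E \ X)) ∪ {x₀}) :=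
        rk_mono subset_union_left
      omega
    have hskew := x0_skew M hXE hlam hx₀X hCXx hnl hncl
    -- piece formulas for K
    have hKA : ∀ A, A ⊆ M.E \ X → rk K A = rk M A := by
      intro A hA
      have h1 := hrkK A (by rw [hKEYx]; exact hA.trans subset_union_left)
      have h2 := skew_prop M hXE hCXX hA hskew
      omega
    have hKAx : ∀ A, A ⊆ M.E \ X →
        rk K (A ∪ {x₀}) + rk M X = rk M (A ∪ X) + 1 := by
      intro A hA
      have hsub : A ∪ {x₀} ⊆ K.E := by
        rw [hKEYx]
        exact union_subset (hA.trans subset_union_left)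
          (singleton_subset_iff.mpr (Or.inr rfl))
      have h1 := hrkK (A ∪ {x₀}) hsub
      have hid : (A ∪ {x₀}) ∪ C_X = (A ∪ C_X) ∪ {x₀} := by
        ext x; simp only [mem_union, mem_singleton_iff]; tauto
      rw [hid] at h1
      have h2 := x0_piece M hXE hlam hx₀X hCXx hnl hncl hA
      omega
    -- choose the pivot p and the good contraction set in M/u
    obtain ⟨p, hpXu⟩ := hXune
    have hpX : p ∈ X := hpXu.1
    have hpu : p ≠ u := hpXu.2
    have hpE : p ∈ M.E := hXE hpX
    have hY'id : (contract M {u}).E \ (X \ {u}) = M.E \ X := by rw [hMuE]; exact id3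
    obtain ⟨C', hC', hnl', hncl'⟩ := exists_good_C (X \ {u}).ncard (contract M {u})
      hMufin hMu (X \ {u}) p (by rw [hMuE]; exact hXu) rfl hlamMu1 hpXu
      (by rw [hY'id]; exact hY2)
    have hC'X : C' ⊆ X \ {u} := hC'.trans diff_subset
    have hC'Mu : C' ⊆ (contract M {u}).E := by
      rw [hMuE]; exact hC'X.trans hXu
    -- the piece K' of M/u on (M.E \ X) ∪ {p}
    have hZsub : (M.E \ X) ∪ {p} ⊆ (contract M {u}).E \ C' := by
      rw [hMuE]
      refine union_subset ?_ ?_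
      · intro x hx
        exact ⟨hYuE hx, fun hc => hx.2 (hC'X hc).1⟩
      · refine singleton_subset_iff.mpr ⟨⟨hpE, hpu⟩, fun hc => (hC' hc).2 rfl⟩
    set D₀ := ((contract M {u}).E \ C') \ ((M.E \ X) ∪ {p}) with hD₀def
    set K' := delete (contract (contract M {u}) C') D₀ with hK'def
    haveI : (contract (contract M {u}) C').Finite := contract_finite _
    haveI hK'fin : K'.Finite := by rw [hK'def]; exact delete_finite _
    have hK'E : K'.E = (M.E \ X) ∪ {p} := by
      rw [hK'def, delete_ground, contract_ground, hD₀def]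
      rw [show (contract M {u}).E \ C' = ((contract M {u}).E \ C') from rfl]
      exact diff_diff_cancel_left hZsub
    have hskew' := x0_skew (contract M {u}) (X := X \ {u}) (x₀ := p)
      (by rw [hMuE]; exact hXu) hlamMu1 hpXu hC' hnl' hncl'
    have hrkK' : ∀ S, S ⊆ (M.E \ X) ∪ {p} →
        rk K' S + rk (contract M {u}) C' = rk (contract M {u}) (S ∪ C') := by
      intro S hS
      rw [hK'def]
      refine piece_rk (contract M {u}) hC'Mu ?_
      rw [hD₀def, diff_diff_cancel_left hZsub]
      exact hS
    have hMX' : rk (contract M {u}) (X \ {u}) + 1 = rk M X := by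
      have := rk_contract_add M (singleton_subset_iff.mpr huE) hXu
      rw [id1, hurk] at this
      omega
    have hMAX' : ∀ A, A ⊆ M.E \ X →
        rk (contract M {u}) (A ∪ (X \ {u})) + 1 = rk M (A ∪ X) := by
      intro A hA
      have hsub : A ∪ (X \ {u}) ⊆ M.E \ {u} := union_subset (hA.trans hYuE) hXu
      have h := rk_contract_add M (singleton_subset_iff.mpr huE) hsub
      rw [hurk] at h
      rw [show (A ∪ (X \ {u})) ∪ {u} = A ∪ X by
        ext x; simp only [mem_union, mem_diff, mem_singleton_iff]
        constructor
        · rintro ((h' | ⟨h', -⟩) | rfl)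
          · exact Or.inl h'
          · exact Or.inr h'
          · exact Or.inr hu
        · rintro (h' | h')
          · exact Or.inl (Or.inl h')
          · rcases em (x = u) with he | he
            · exact Or.inr he
            · exact Or.inl (Or.inr ⟨h', he⟩)] at h
      omega
    have hK'A : ∀ A, A ⊆ M.E \ X → rk K' A = rk M A := by
      intro A hA
      have h1 := hrkK' A (hA.trans subset_union_left)
      have hAY' : A ⊆ (contract M {u}).E \ (X \ {u}) := by rw [hY'id]; exact hA
      have h2 := skew_prop (contract M {u}) (X := X \ {u}) (by rw [hMuE]; exact hXu)
        hC'X hAY' hskew'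
      rw [hrktrans A hA] at h2
      omega
    have hK'Ap : ∀ A, A ⊆ M.E \ X →
        rk K' (A ∪ {p}) + rk M X = rk M (A ∪ X) + 1 := by
      intro A hA
      have h1 := hrkK' (A ∪ {p}) (union_subset (hA.trans subset_union_left)
        (singleton_subset_iff.mpr (Or.inr rfl)))
      have hid : (A ∪ {p}) ∪ C' = (A ∪ C') ∪ {p} := by
        ext x; simp only [mem_union, mem_singleton_iff]; tauto
      rw [hid] at h1
      have hAY' : A ⊆ (contract M {u}).E \ (X \ {u}) := by rw [hY'id]; exact hA
      have h2 := x0_piece (contract M {u}) (X := X \ {u}) (x₀ := p)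
        (by rw [hMuE]; exact hXu) hlamMu1 hpXu hC' hnl' hncl' (A := A) hAY'
      have h3 := hMX'
      have h4 := hMAX' A hA
      omega
    -- the relabelling map
    set f : α → α := fun a => if a = x₀ then p else a with hfdef
    have hpN : p ≠ x₀ → p ∉ N.E := by
      intro hne hmem
      have : p ∈ X ∩ N.E := ⟨hpX, hmem⟩
      rw [hx₀] at this
      exact hne this
    have hfinj : InjOn f N.E := by
      intro a ha b hb hab
      rw [hfdef] at hab
      simp only at hab
      rcases em (a = x₀) with ha' | ha' <;> rcases em (b = x₀) with hb' | hb'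
      · rw [ha', hb']
      · rw [if_pos ha', if_neg hb'] at hab
        rcases em (p = x₀) with hp' | hp'
        · rw [ha', ← hab, hp']
        · exact absurd (hab ▸ hb) (hpN hp')
      · rw [if_neg ha', if_pos hb'] at hab
        rcases em (p = x₀) with hp' | hp'
        · rw [hb', hab, hp']
        · exact absurd (hab ▸ ha) (hpN hp')
      · rwa [if_neg ha', if_neg hb'] at hab
    have hfx₀ : f x₀ = p := by rw [hfdef]; simp
    have hfother : ∀ a, a ≠ x₀ → f a = a := by
      intro a ha; rw [hfdef]; simp [ha]
    -- the rank-transfer under the relabelling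
    have htrans : ∀ S, S ⊆ (M.E \ X) ∪ {x₀} → rk K' (f '' S) = rk K S := by
      intro S hS
      have hA₀ : S \ {x₀} ⊆ M.E \ X := by
        intro x hx
        rcases hS hx.1 with h | h
        · exact h
        · exact absurd h hx.2
      by_cases hx₀S : x₀ ∈ S
      · have hfS : f '' S = (S \ {x₀}) ∪ {p} := by
          ext y
          simp only [mem_image, mem_union, mem_diff, mem_singleton_iff]
          constructor
          · rintro ⟨x, hxS, rfl⟩
            rcases em (x = x₀) with h | h
            · rw [h, hfx₀]; exact Or.inr rfl
            · rw [hfother x h]; exact Or.inl ⟨hxS, h⟩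
          · rintro (⟨hyS, hy⟩ | rfl)
            · exact ⟨y, hyS, hfother y hy⟩
            · exact ⟨x₀, hx₀S, hfx₀⟩
        have hSd : S = (S \ {x₀}) ∪ {x₀} := by
          ext y
          simp only [mem_union, mem_diff, mem_singleton_iff]
          constructor
          · intro hyS
            rcases em (y = x₀) with h | h
            · exact Or.inr h
            · exact Or.inl ⟨hyS, h⟩
          · rintro (⟨h, -⟩ | rfl)
            · exact h
            · exact hx₀S
        rw [hfS]
        have h1 := hK'Ap (S \ {x₀}) hA₀
        have h2 := hKAx (S \ {x₀}) hA₀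
        rw [← hSd] at h2
        omega
      · have hfS : f '' S = S := by
          ext y
          simp only [mem_image]
          constructor
          · rintro ⟨x, hxS, rfl⟩
            rw [hfother x (fun h => hx₀S (h ▸ hxS))]
            exact hxS
          · intro hyS
            exact ⟨y, hyS, hfother y (fun h => hx₀S (h ▸ hyS))⟩
        have hSY : S ⊆ M.E \ X := by
          intro x hx
          rcases hS hx with h | h
          · exact h
          · exact absurd (h ▸ hx) hx₀S
        rw [hfS, hK'A S hSY, hKA S hSY]
    -- N.E in terms of K
    have hNEeq : N.E = ((((M.E \ X) ∪ {x₀}) \ C_Y) \ D_Y) := by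
      have : N.E = (K.E \ C_Y) \ D_Y := by rw [chainK]; rfl
      rw [this, hKEYx]
    have hpCY : p ∉ C_Y := fun h => (hCYY h).2 hpX
    have hpDY : p ∉ D_Y := fun h => (hDYY h).2 hpX
    have hx₀CY : x₀ ∉ C_Y := fun h => (hCYY h).2 hx₀X
    have hx₀DY : x₀ ∉ D_Y := fun h => (hDYY h).2 hx₀X
    have hmapE : f '' N.E = (((M.E \ X) ∪ {p}) \ C_Y) \ D_Y := by
      ext y
      simp only [mem_image, mem_diff, mem_union, mem_singleton_iff]
      constructor
      · rintro ⟨x, hxN, rfl⟩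
        rcases em (x = x₀) with h | h
        · rw [h, hfx₀]
          exact ⟨⟨Or.inr rfl, hpCY⟩, hpDY⟩
        · rw [hfother x h]
          have hx' : x ∈ ((((M.E \ X) ∪ {x₀}) \ C_Y) \ D_Y) := hNEeq ▸ hxN
          obtain ⟨⟨h1, h2⟩, h3⟩ := hx'
          rcases h1 with h1 | h1
          · exact ⟨⟨Or.inl h1, h2⟩, h3⟩
          · exact absurd h1 h
      · rintro ⟨⟨hy1 | rfl, hyC⟩, hyD⟩
        · have hyN : y ∈ N.E := by
            rw [hNEeq]
            exact ⟨⟨Or.inl hy1, hyC⟩, hyD⟩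
          exact ⟨y, hyN, hfother y (fun h => hy1.2 (h ▸ hx₀X))⟩
        · exact ⟨x₀, hx₀N, hfx₀⟩
    -- conclude
    haveI := map_finite hfinj
    haveI : (contract K' C_Y).Finite := contract_finite _
    haveI : (delete (contract K' C_Y) D_Y).Finite := delete_finite _
    have hCYK' : C_Y ⊆ K'.E := by
      rw [hK'E]; exact hCYY.trans subset_union_left
    have hRE : (delete (contract K' C_Y) D_Y).E = (((M.E \ X) ∪ {p}) \ C_Y) \ D_Y := by
      rw [delete_ground, contract_ground, hK'E]
    have hmapR : N.map f hfinj = delete (contract K' C_Y) D_Y := by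
      refine eq_of_rk_eq ?_ ?_
      · rw [map_ground, hmapE, hRE]
      intro A hA
      rw [map_ground] at hA
      obtain ⟨B, hB, rfl⟩ := exists_image_rep hA
      have hBCY : B ∪ C_Y ⊆ (M.E \ X) ∪ {x₀} := by
        refine union_subset ?_ (hCYY.trans subset_union_left)
        intro x hx
        have := hNEeq ▸ (hB hx)
        exact this.1.1
      have hfBC : f '' (B ∪ C_Y) = (f '' B) ∪ C_Y := by
        rw [image_union]
        congr 1
        ext y
        simp only [mem_image]
        constructor
        · rintro ⟨x, hxC, rfl⟩
          rw [hfother x (fun h => hx₀CY (h ▸ hxC))]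
          exact hxC
        · intro hy
          exact ⟨y, hy, hfother y (fun h => hx₀CY (h ▸ hy))⟩
      have h1 : rk (N.map f hfinj) (f '' B) = rk N B := rk_map_image hfinj hB
      have h2 := hrkN B hB
      have h3 : rk (delete (contract K' C_Y) D_Y) (f '' B) + rk K' C_Y =
          rk K' ((f '' B) ∪ C_Y) := by
        refine piece_rk K' hCYK' ?_
        rw [hK'E]
        have : f '' B ⊆ f '' N.E := image_mono hB
        rw [hmapE] at this
        exact this
      have h4 := htrans (B ∪ C_Y) hBCY
      rw [hfBC] at h4
      have h5 := htrans C_Y (hCYY.trans subset_union_left)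
      have hfCY : f '' C_Y = C_Y := by
        ext y
        simp only [mem_image]
        constructor
        · rintro ⟨x, hxC, rfl⟩
          rw [hfother x (fun h => hx₀CY (h ▸ hxC))]
          exact hxC
        · intro hy
          exact ⟨y, hy, hfother y (fun h => hx₀CY (h ▸ hy))⟩
      rw [hfCY] at h5
      omega
    refine ⟨f, hfinj, C' ∪ C_Y, D₀ ∪ D_Y, ?_⟩
    rw [hmapR, hK'def]
    refine (minor_chain (contract M {u}) hC'Mu ?_ ?_ ?_ ?_ ?_).symm
    · rw [hMuE]; exact hCYY.trans hYuE
    · rw [hD₀def]; exact diff_subset.trans diff_subset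
    · exact Set.disjoint_left.mpr fun x hx hx2 => (hCYY hx).2 (hC'X hx2).1
    · rw [hD₀def]; exact disjoint_sdiff_left.mono_left diff_subset
    · rw [hD₀def]
      exact Set.disjoint_left.mpr fun x hx hx2 => hx2.2 (Or.inl (hCYY hx))

end NDP
namespace NDP

variable {α : Type*}

open Set Matroid

lemma stmt12_aux (M N : Matroid α) [M.Finite] (hconn : Connected M)
    (hN3 : ThreeConnected N) (hmin : Minor N M) (U : Set α) (hUE : U ⊆ M.E)
    (hU2 : 2 ≤ U.ncard) (hUc2 : 2 ≤ (M.E \ U).ncard) (hUlam : lam M U = 1)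
    (hUN : (U ∩ N.E).ncard ≤ 1) {u : α} (hu : u ∈ U) :
    (Connected (contract M {u}) → IsoMinor (contract M {u}) N) ∧
    (Connected (delete M {u}) → IsoMinor (delete M {u}) N) := by
  haveI hNfin := minor_finite hmin
  constructor
  · intro hc
    exact crux_contract M N hconn hN3 U hUE hU2 hUc2 hUlam hmin hUN hu hc
  · intro hd
    haveI : M✶.Finite := inferInstance
    have hconn' : Connected M✶ := connected_dual_of hconn
    have hN3' : ThreeConnected N✶ := threeConnected_dual hN3
    have hmin' : Minor N✶ M✶ := minor_dual hmin
    have hUE' : U ⊆ M✶.E := by rw [dual_ground]; exact hUE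
    have hUc2' : 2 ≤ (M✶.E \ U).ncard := by rw [dual_ground]; exact hUc2
    have hUlam' : lam M✶ U = 1 := by rw [lam_dual M hUE]; exact hUlam
    have hUN' : (U ∩ N✶.E).ncard ≤ 1 := by rw [dual_ground]; exact hUN
    have hd' : Connected (contract M✶ {u}) := by
      rw [← dual_delete]
      haveI := delete_finite (M := M) {u}
      exact connected_dual_of hd
    obtain ⟨f, hf, hm⟩ := crux_contract M✶ N✶ hconn' hN3' U hUE' hU2 hUc2' hUlam'
      hmin' hUN' hu hd'
    haveI : (contract M✶ {u}).Finite := contract_finite _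
    haveI : N✶.Finite := inferInstance
    have hm2 := minor_dual hm
    rw [dual_contract, dual_dual] at hm2
    rw [map_dual (N := N✶) hf] at hm2
    have hdd : N✶✶ = N := dual_dual N
    rw [map_congr hdd (f := f) hf] at hm2
    exact ⟨f, hdd ▸ hf, hm2⟩

end NDP
/-- For a 2-separation `(X, Y)` of a connected matroid `M` with a
3-connected minor `N`, some side `U` meets `E(N)` in at most one element, and for
every `u ∈ U`, if `M/u` (resp. `M\u`) is connected then it has an `N`-minor. -/
theorem stmt12 (M N : Matroid α) [M.Finite] (hconn : NDP.Connected M)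
    (hNmin : NDP.Minor N M) (hN3 : NDP.ThreeConnected N)
    (X Y : Set α) (hsep : NDP.IsKSeparation M 2 X) (hY : Y = M.E \ X) :
    ∃ U, (U = X ∨ U = Y) ∧ (U ∩ N.E).ncard ≤ 1 ∧
      ∀ u ∈ U,
        (NDP.Connected (NDP.contract M {u}) → NDP.IsoMinor (NDP.contract M {u}) N) ∧
        (NDP.Connected (NDP.delete M {u}) → NDP.IsoMinor (NDP.delete M {u}) N) := by
  classical
  subst hY
  obtain ⟨⟨hXE, hXlam⟩, hX2, hY2⟩ := hsep
  haveI hNfin := NDP.minor_finite hNmin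
  have hEfin := M.ground_finite
  have hXne : X.Nonempty := Set.nonempty_of_ncard_ne_zero (by omega)
  have hYne : (M.E \ X).Nonempty := Set.nonempty_of_ncard_ne_zero (by omega)
  have hlam1 : NDP.lam M X = 1 := by
    have hge := NDP.one_le_lam_of_connected hconn hXE hXne hYne
    have h2 : ((2 : ℕ) : ℤ) - 1 = 1 := by norm_num
    rw [h2] at hXlam
    omega
  by_cases hXN : (X ∩ N.E).ncard ≤ 1
  · refine ⟨X, Or.inl rfl, hXN, fun u hu => ?_⟩
    exact NDP.stmt12_aux M N hconn hN3 hNmin X hXE hX2 hY2 hlam1 hXN hu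
  · have hYN : ((M.E \ X) ∩ N.E).ncard ≤ 1 := by
      by_contra hYN'
      push_neg at hXN hYN'
      obtain ⟨C, D, hCE, hDE, hCD, -, -, -, hNdef⟩ := NDP.minor_normalize hNmin
      have hid : (X \ C) \ D = X ∩ N.E := by
        have hNE : N.E = (M.E \ C) \ D := by rw [hNdef]; rfl
        ext x
        simp only [Set.mem_diff, Set.mem_inter_iff, hNE]
        constructor
        · rintro ⟨⟨hxX, hxC⟩, hxD⟩
          exact ⟨hxX, ⟨⟨hXE hxX, hxC⟩, hxD⟩⟩
        · rintro ⟨hxX, ⟨⟨-, hxC⟩, hxD⟩⟩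
          exact ⟨⟨hxX, hxC⟩, hxD⟩
      have hlamN : NDP.lam N (X ∩ N.E) ≤ 1 := by
        have h := NDP.lam_minor_le M hCE hDE hCD hXE
        rw [hid, ← hNdef] at h
        omega
      have hcompl : N.E \ (X ∩ N.E) = (M.E \ X) ∩ N.E := by
        ext x
        simp only [Set.mem_diff, Set.mem_inter_iff]
        constructor
        · rintro ⟨hxN, hx⟩
          exact ⟨⟨NDP.minor_ground hNmin hxN, fun hxX => hx ⟨hxX, hxN⟩⟩, hxN⟩
        · rintro ⟨⟨-, hxX⟩, hxN⟩
          exact ⟨hxN, fun h => hxX h.1⟩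
      refine hN3 2 (by omega) (X ∩ N.E) ⟨⟨Set.inter_subset_right, ?_⟩, by omega, ?_⟩
      · have h2 : ((2 : ℕ) : ℤ) - 1 = 1 := by norm_num
        rw [h2]
        exact hlamN
      · rw [hcompl]
        omega
    refine ⟨M.E \ X, Or.inr rfl, hYN, fun u hu => ?_⟩
    have hXc : M.E \ (M.E \ X) = X := Set.diff_diff_cancel_left hXE
    refine NDP.stmt12_aux M N hconn hN3 hNmin (M.E \ X) Set.diff_subset hY2
      (by rw [hXc]; exact hX2) ?_ hYN hu
    rw [← hlam1, ← NDP.lam_compl M hXE]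
end

section
/- Let M be a 3-connected matroid containing a set P with M|P ≅ U_{3,5}. Then for each element p ∈ cl(P) − P, the deletion M \ p is 3-connected. -/
open Set Matroid

variable {α β : Type*}

section Aux

lemma NDP.rk_eq_ncard_of_basis'_s14 {M : Matroid α} [M.Finite] {I X : Set α}
    (hI : M.IsBasis' I X) : NDP.rk M X = I.ncard := by
  refine le_antisymm (csSup_le ⟨0, ∅, M.empty_indep, empty_subset _, by simp⟩ ?_)
    (le_csSup ⟨M.E.ncard, ?_⟩ ⟨I, hI.indep, hI.subset, rfl⟩)
  · rintro n ⟨J, hJ, hJX, rfl⟩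
    have h : J.encard ≤ I.encard := by
      by_contra hlt
      push_neg at hlt
      obtain ⟨e, heJI, hins⟩ := hI.indep.augment hJ hlt
      exact hI.insert_not_indep ⟨hJX heJI.1, heJI.2⟩ hins
    have hIf : I.Finite := M.set_finite I hI.indep.subset_ground
    rw [Set.ncard_def, Set.ncard_def]
    exact ENat.toNat_le_toNat h hIf.encard_lt_top.ne
  · rintro n ⟨J, hJ, hJX, rfl⟩
    exact Set.ncard_le_ncard hJ.subset_ground M.ground_finite

lemma NDP.rk_union_closure {M : Matroid α} [M.Finite] {X Y : Set α}
    (hX : X ⊆ M.E) (hY : Y ⊆ M.closure X) : NDP.rk M (X ∪ Y) = NDP.rk M X := by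
  obtain ⟨I, hI⟩ := M.exists_isBasis X hX
  have hIc : M.IsBasis I (M.closure X) := hI.isBasis_closure_right
  have hXY : X ∪ Y ⊆ M.closure X := union_subset (M.subset_closure X hX) hY
  have h2 : M.IsBasis I (X ∪ Y) :=
    hIc.isBasis_subset (hI.subset.trans subset_union_left) hXY
  rw [NDP.rk_eq_ncard_of_basis'_s14 h2.isBasis', NDP.rk_eq_ncard_of_basis'_s14 hI.isBasis']

lemma NDP.rk_restrict_s14 {M : Matroid α} {R X : Set α} (hXR : X ⊆ R) :
    NDP.rk (M ↾ R) X = NDP.rk M X := by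
  unfold NDP.rk
  congr 1
  ext n
  constructor
  · rintro ⟨I, hI, hIX, rfl⟩
    exact ⟨I, (Matroid.restrict_indep_iff.1 hI).1, hIX, rfl⟩
  · rintro ⟨I, hI, hIX, rfl⟩
    exact ⟨I, Matroid.restrict_indep_iff.2 ⟨hI, hIX.trans hXR⟩, hIX, rfl⟩

lemma NDP.closure_spans {M : Matroid α} [M.Finite] {P S : Set α}
    (hP : NDP.UnifRestr M 3 P) (hS : S ⊆ P) (h3 : 3 ≤ S.ncard) :
    M.closure P ⊆ M.closure S := by
  obtain ⟨S', hS'S, hS'3⟩ := Set.exists_subset_card_eq h3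
  have hS'P : S' ⊆ P := hS'S.trans hS
  have hS'E : S' ⊆ M.E := hS'P.trans hP.1
  have hind : M.Indep S' := (hP.2 S' hS'P).2 hS'3.le
  have hPcl : P ⊆ M.closure S' := by
    intro q hq
    by_cases hqS : q ∈ S'
    · exact M.subset_closure S' hS'E hqS
    · rw [hind.mem_closure_iff']
      refine ⟨hP.1 hq, fun hins => absurd ((hP.2 _ (insert_subset hq hS'P)).1 hins) ?_⟩
      rw [Set.ncard_insert_of_notMem hqS (M.set_finite S' hS'E)]
      omega
  exact (M.closure_subset_closure_of_subset_closure hPcl).trans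
    (M.closure_subset_closure hS'S)

end Aux


/-- If `M|P ≅ U_{3,5}` in a 3-connected matroid `M`, then `M \ p` is
3-connected for each `p ∈ cl(P) − P`. -/
theorem stmt14 (M : Matroid α) [M.Finite] (hM : NDP.ThreeConnected M)
    (P : Set α) (hP : NDP.UnifRestr M 3 P) (hcard : P.ncard = 5)
    (p : α) (hp : p ∈ M.closure P \ P) :
    NDP.ThreeConnected (NDP.delete M {p}) := by
  obtain ⟨hpcl, hpP⟩ := hp
  have hPE : P ⊆ M.E := hP.1
  have hpE : p ∈ M.E := M.closure_subset_ground P hpcl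
  set E' : Set α := M.E \ {p} with hE'
  have hPE' : P ⊆ E' := fun q hq => ⟨hPE hq, fun hqp => hpP (mem_singleton_iff.1 hqp ▸ hq)⟩
  have hE'E : E' ⊆ M.E := diff_subset
  have hEfin : M.E.Finite := M.ground_finite
  have hpclE' : p ∈ M.closure E' :=
    M.closure_subset_closure hPE' hpcl
  have hErk : NDP.rk M M.E = NDP.rk M E' := by
    have hU : E' ∪ {p} = M.E := by
      rw [hE', diff_union_self, union_eq_self_of_subset_right (singleton_subset_iff.2 hpE)]
    rw [← hU, NDP.rk_union_closure hE'E (singleton_subset_iff.2 hpclE')]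
  intro k hk X hX
  obtain ⟨⟨hXE', hlam⟩, hkX, hkY⟩ := hX
  have hdel : NDP.delete M {p} = M ↾ E' := rfl
  rw [hdel] at hXE' hlam hkY
  rw [Matroid.restrict_ground_eq] at hXE'
  set Y : Set α := E' \ X with hYdef
  have hYE' : Y ⊆ E' := diff_subset
  have hpX : p ∉ X := fun h => (hXE' h).2 rfl
  have hXE : X ⊆ M.E := hXE'.trans hE'E
  have hYE : Y ⊆ M.E := hYE'.trans hE'E
  -- rewrite lam of the restriction
  have hlam' : (NDP.rk M X : ℤ) + (NDP.rk M Y : ℤ) - (NDP.rk M E' : ℤ) ≤ (k : ℤ) - 1 := by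
    have h1 : NDP.rk (M ↾ E') X = NDP.rk M X := NDP.rk_restrict_s14 hXE'
    have h2 : NDP.rk (M ↾ E') Y = NDP.rk M Y := NDP.rk_restrict_s14 hYE'
    have h3 : NDP.rk (M ↾ E') E' = NDP.rk M E' := NDP.rk_restrict_s14 Subset.rfl
    unfold NDP.lam at hlam
    rw [Matroid.restrict_ground_eq] at hlam
    rw [← hYdef] at hlam
    rwa [h1, h2, h3] at hlam
  rw [Matroid.restrict_ground_eq, ← hYdef] at hkY
  -- split P between the two sides
  have hXY : X ∪ Y = E' := union_diff_cancel hXE'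
  have hPXY : (P ∩ X) ∪ (P ∩ Y) = P := by
    rw [← inter_union_distrib_left, hXY, inter_eq_self_of_subset_left hPE']
  have hdisj : Disjoint (P ∩ X) (P ∩ Y) :=
    Disjoint.mono inter_subset_right inter_subset_right disjoint_sdiff_right
  have h5 : (P ∩ X).ncard + (P ∩ Y).ncard = 5 := by
    rw [← Set.ncard_union_eq hdisj (hEfin.subset (inter_subset_left.trans hPE))
      (hEfin.subset (inter_subset_left.trans hPE)), hPXY, hcard]
  have hsplit : 3 ≤ (P ∩ X).ncard ∨ 3 ≤ (P ∩ Y).ncard := by omega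
  rcases hsplit with h3 | h3
  · -- p ∈ cl X ; lift the separation to (X ∪ {p}, Y)
    have hpclX : p ∈ M.closure X :=
      (NDP.closure_spans hP inter_subset_left h3).trans
        (M.closure_subset_closure inter_subset_right) hpcl
    refine hM k hk (X ∪ {p}) ⟨⟨union_subset hXE (singleton_subset_iff.2 hpE), ?_⟩, ?_, ?_⟩
    · unfold NDP.lam
      have hr1 : NDP.rk M (X ∪ {p}) = NDP.rk M X :=
        NDP.rk_union_closure hXE (singleton_subset_iff.2 hpclX)
      have hc : M.E \ (X ∪ {p}) = Y := by
        rw [hYdef, hE', diff_diff, union_comm]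
      rw [hr1, hc, hErk]
      exact hlam'
    · exact hkX.trans (Set.ncard_le_ncard subset_union_left
        (hEfin.subset (union_subset hXE (singleton_subset_iff.2 hpE))))
    · have hc : M.E \ (X ∪ {p}) = Y := by
        rw [hYdef, hE', diff_diff, union_comm]
      rw [hc]
      exact hkY
  · -- p ∈ cl Y ; lift the separation to (X, Y ∪ {p})
    have hpclY : p ∈ M.closure Y :=
      (NDP.closure_spans hP inter_subset_left h3).trans
        (M.closure_subset_closure inter_subset_right) hpcl
    have hc : M.E \ X = Y ∪ {p} := by
      ext q
      constructor
      · rintro ⟨hqE, hqX⟩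
        by_cases hqp : q = p
        · exact Or.inr (by simp [hqp])
        · exact Or.inl ⟨⟨hqE, hqp⟩, hqX⟩
      · rintro (⟨⟨hqE, _⟩, hqX⟩ | hq)
        · exact ⟨hqE, hqX⟩
        · rw [mem_singleton_iff.1 hq]
          exact ⟨hpE, hpX⟩
    refine hM k hk X ⟨⟨hXE, ?_⟩, hkX, ?_⟩
    · unfold NDP.lam
      have hr1 : NDP.rk M (Y ∪ {p}) = NDP.rk M Y :=
        NDP.rk_union_closure hYE (singleton_subset_iff.2 hpclY)
      rw [hc, hr1, hErk]
      exact hlam'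
    · rw [hc]
      exact hkY.trans (Set.ncard_le_ncard subset_union_left
        (hEfin.subset (union_subset hYE (singleton_subset_iff.2 hpE))))
end

section
/- Let M be a 3-connected matroid and z ∈ E(M). Then M has a vertical 3-separation (X, {z}, Y) if and only if si(M/z), the simplification of M/z, is not 3-connected. -/
open Set Matroid

variable {α β : Type*}

namespace NDP18

open NDP

variable {α : Type*} {M : Matroid α} {X Y I J B : Set α} {e f : α}

/-! ### Basic rank lemmas -/

lemma rk_set_bddAbove (hE : M.E.Finite) (X : Set α) :
    BddAbove {n : ℕ | ∃ I, M.Indep I ∧ I ⊆ X ∧ I.ncard = n} := by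
  refine ⟨M.E.ncard, fun n hn => ?_⟩
  obtain ⟨I, hI, -, rfl⟩ := hn
  exact Set.ncard_le_ncard hI.subset_ground hE

lemma rk_set_nonempty (M : Matroid α) (X : Set α) :
    {n : ℕ | ∃ I, M.Indep I ∧ I ⊆ X ∧ I.ncard = n}.Nonempty :=
  ⟨0, ∅, M.empty_indep, empty_subset _, Set.ncard_empty _⟩

lemma le_rk_of_indep (hE : M.E.Finite) (hI : M.Indep I) (hIX : I ⊆ X) :
    I.ncard ≤ rk M X :=
  le_csSup (rk_set_bddAbove hE X) ⟨I, hI, hIX, rfl⟩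

lemma rk_le_iff (hE : M.E.Finite) {m : ℕ} :
    rk M X ≤ m ↔ ∀ I, M.Indep I → I ⊆ X → I.ncard ≤ m := by
  constructor
  · intro h I hI hIX
    exact (le_rk_of_indep hE hI hIX).trans h
  · intro h
    exact csSup_le (rk_set_nonempty M X) (by rintro n ⟨I, hI, hIX, rfl⟩; exact h I hI hIX)

lemma rk_eq_ncard_basis' (hE : M.E.Finite) (hI : M.IsBasis' I X) : rk M X = I.ncard := by
  refine le_antisymm ?_ (le_rk_of_indep hE hI.indep hI.subset)
  rw [rk_le_iff hE]
  intro J hJ hJX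
  obtain ⟨J', hJ', hJJ'⟩ := hJ.subset_isBasis'_of_subset hJX
  have h1 : (M ↾ X).IsBase J' := isBase_restrict_iff'.2 hJ'
  have h2 : (M ↾ X).IsBase I := isBase_restrict_iff'.2 hI
  rw [← h1.ncard_eq_ncard_of_isBase h2]
  exact Set.ncard_le_ncard hJJ' (hE.subset hJ'.indep.subset_ground)

lemma rk_le_ncard (hE : M.E.Finite) (hX : X.Finite) : rk M X ≤ X.ncard := by
  rw [rk_le_iff hE]
  exact fun I _ hIX => Set.ncard_le_ncard hIX hX

lemma rk_mono (hE : M.E.Finite) (hXY : X ⊆ Y) : rk M X ≤ rk M Y := by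
  rw [rk_le_iff hE]
  exact fun I hI hIX => le_rk_of_indep hE hI (hIX.trans hXY)

lemma rk_subadd (hE : M.E.Finite) (X Y : Set α) : rk M (X ∪ Y) ≤ rk M X + rk M Y := by
  rw [rk_le_iff hE]
  intro I hI hIXY
  have hfin : I.Finite := hE.subset hI.subset_ground
  have h1 : (I ∩ X).ncard + (I \ X).ncard = I.ncard :=
    Set.ncard_inter_add_ncard_diff_eq_ncard I X hfin
  have h2 : (I ∩ X).ncard ≤ rk M X := le_rk_of_indep hE (hI.inter_right X) inter_subset_right
  have h3 : (I \ X).ncard ≤ rk M Y := by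
    refine le_rk_of_indep hE (hI.diff X) fun x hx => ?_
    rcases hIXY hx.1 with h | h
    · exact absurd h hx.2
    · exact h
  omega

lemma rk_le_of_subset_closure (hE : M.E.Finite) (h : X ⊆ M.closure Y) :
    rk M X ≤ rk M Y := by
  rw [rk_le_iff hE]
  intro I hI hIX
  obtain ⟨J, hJ⟩ := M.exists_isBasis' Y
  have hJcl : M.closure J = M.closure Y := hJ.closure_eq_closure
  have hbJ : M.IsBasis J (I ∪ J) := by
    refine hJ.indep.isBasis_of_subset_of_subset_closure subset_union_right ?_
    exact union_subset (fun x hx => hJcl ▸ h (hIX hx)) (M.subset_closure J hJ.indep.subset_ground)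
  calc I.ncard ≤ rk M (I ∪ J) := le_rk_of_indep hE hI subset_union_left
    _ = J.ncard := rk_eq_ncard_basis' hE hbJ.isBasis'
    _ = rk M Y := (rk_eq_ncard_basis' hE hJ).symm

lemma rk_insert_of_mem_closure (hE : M.E.Finite) (hXE : X ⊆ M.E) (hz : e ∈ M.closure X) :
    rk M (insert e X) = rk M X := by
  refine le_antisymm (rk_le_of_subset_closure hE ?_) (rk_mono hE (subset_insert _ _))
  exact insert_subset hz (M.subset_closure X hXE)

lemma rk_insert_of_not_mem_closure (hE : M.E.Finite) (hXE : X ⊆ M.E) (heE : e ∈ M.E)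
    (he : e ∉ M.closure X) : rk M (insert e X) = rk M X + 1 := by
  obtain ⟨I, hI⟩ := M.exists_isBasis X hXE
  have hIcl : M.closure I = M.closure X := hI.closure_eq_closure
  have heI : e ∉ I := fun h => he (hIcl ▸ M.subset_closure I hI.indep.subset_ground h)
  have hins : M.Indep (insert e I) := by
    rw [hI.indep.insert_indep_iff_of_notMem heI]
    exact ⟨heE, fun h => he (hIcl ▸ h)⟩
  have hbas : M.IsBasis (insert e I) (insert e X) := by
    refine hins.isBasis_of_subset_of_subset_closure (insert_subset_insert hI.subset) ?_
    refine insert_subset (M.subset_closure _ hins.subset_ground (mem_insert _ _)) ?_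
    refine fun x hx => ?_
    have : x ∈ M.closure I := hIcl ▸ M.subset_closure X hXE hx
    exact M.closure_subset_closure (subset_insert _ _) this
  rw [rk_eq_ncard_basis' hE hbas.isBasis', rk_eq_ncard_basis' hE hI.isBasis',
    Set.ncard_insert_of_notMem heI (hE.subset hI.indep.subset_ground)]

lemma rk_singleton_eq_one (hE : M.E.Finite) (h : M.Indep {e}) : rk M {e} = 1 := by
  rw [rk_eq_ncard_basis' hE h.isBasis_self.isBasis', Set.ncard_singleton]

lemma rk_singleton_eq_zero (hE : M.E.Finite) (h : ¬ M.Indep {e}) : rk M {e} = 0 := by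
  rw [Nat.le_zero.symm, rk_le_iff hE]
  intro I hI hIe
  rcases subset_singleton_iff_eq.1 hIe with rfl | rfl
  · simp
  · exact absurd hI h

lemma indep_singleton_iff' (M : Matroid α) :
    M.Indep {e} ↔ e ∈ M.E ∧ e ∉ M.closure ∅ := by
  have := M.empty_indep.insert_indep_iff_of_notMem (notMem_empty e)
  rw [show insert e (∅ : Set α) = {e} by simp] at this
  rw [this]
  simp [mem_diff]

lemma exists_indep_pair_of_two_le_rk (hE : M.E.Finite) (h : 2 ≤ rk M X) :
    ∃ e f, e ∈ X ∧ f ∈ X ∧ e ≠ f ∧ M.Indep {e, f} := by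
  obtain ⟨I, hI⟩ := M.exists_isBasis' X
  rw [rk_eq_ncard_basis' hE hI] at h
  obtain ⟨e, f, heI, hfI, hef⟩ :=
    (Set.one_lt_ncard_iff (hE.subset hI.indep.subset_ground)).1 (by omega)
  exact ⟨e, f, hI.subset heI, hI.subset hfI, hef,
    hI.indep.subset (by rw [Set.pair_subset_iff]; exact ⟨heI, hfI⟩)⟩

lemma not_mem_closure_of_indep_pair (h : M.Indep {e, f}) (hne : e ≠ f) :
    f ∉ M.closure {e} := by
  have h1 : M.Indep {e} := h.subset (by simp)
  have h2 : M.Indep (insert f {e}) := by rwa [Set.pair_comm] at h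
  rw [h1.insert_indep_iff_of_notMem (by simpa using hne.symm)] at h2
  exact h2.2

lemma mem_closure_of_dep_pair (hfE : f ∈ M.E) (he : M.Indep {e})
    (h : ¬ M.Indep {e, f}) (hne : e ≠ f) : f ∈ M.closure {e} := by
  by_contra hcl
  refine h ?_
  rw [Set.pair_comm, show ({f, e} : Set α) = insert f {e} from rfl,
    he.insert_indep_iff_of_notMem (by simpa using hne.symm)]
  exact ⟨hfE, hcl⟩

lemma mem_closure_singleton_symm (he : M.Indep {e}) (hf : M.Indep {f})
    (h : f ∈ M.closure {e}) : e ∈ M.closure {f} := by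
  have hf0 : f ∉ M.closure ∅ := ((indep_singleton_iff' M).1 hf).2
  have := Matroid.closure_exchange (X := ∅) (e := f) (f := e)
    ⟨by simpa using h, hf0⟩
  simpa using this.1

lemma closure_singleton_eq_of_parallel (he : M.Indep {e}) (hf : M.Indep {f})
    (h : f ∈ M.closure {e}) : M.closure {e} = M.closure {f} := by
  have h' := mem_closure_singleton_symm he hf h
  refine le_antisymm ?_ ?_
  · exact M.closure_subset_closure_of_subset_closure (by simpa using h')
  · exact M.closure_subset_closure_of_subset_closure (by simpa using h)

/-! ### Dual, restriction and contraction rank formulas -/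

lemma rk_restrict {R : Set α} (hXR : X ⊆ R) : rk (M ↾ R) X = rk M X := by
  unfold rk
  congr 1
  ext n
  constructor
  · rintro ⟨I, hI, hIX, rfl⟩
    exact ⟨I, (restrict_indep_iff.1 hI).1, hIX, rfl⟩
  · rintro ⟨I, hI, hIX, rfl⟩
    exact ⟨I, restrict_indep_iff.2 ⟨hI, hIX.trans hXR⟩, hIX, rfl⟩

lemma rk_ground_eq_ncard_base (hE : M.E.Finite) (hB : M.IsBase B) : rk M M.E = B.ncard :=
  rk_eq_ncard_basis' hE hB.isBasis_ground.isBasis'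

lemma rk_dual_add (hE : M.E.Finite) (hA : X ⊆ M.E) :
    rk M✶ X + rk M M.E = X.ncard + rk M (M.E \ X) := by
  obtain ⟨I, hI⟩ := M.exists_isBasis (M.E \ X) diff_subset
  obtain ⟨B, hB, hIB⟩ := hI.indep.subset_isBasis_of_subset hI.indep.subset_ground
  rw [isBasis_ground_iff] at hB
  have hBfin : B.Finite := hE.subset hB.indep.subset_ground
  have hIeq : B ∩ (M.E \ X) = I :=
    (hI.eq_of_subset_indep (hB.indep.inter_right _) (subset_inter hIB hI.subset)
      inter_subset_right).symm
  have hEd : M✶.E.Finite := by rwa [dual_ground]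
  have e8 : (B \ X).ncard = I.ncard := by
    rw [← hIeq]
    congr 1
    ext x
    simp only [mem_inter_iff, mem_diff]
    exact ⟨fun h => ⟨h.1, hB.indep.subset_ground h.1, h.2⟩, fun h => ⟨h.1, h.2.2⟩⟩
  have e6 : (X ∩ B).ncard + (X \ B).ncard = X.ncard :=
    Set.ncard_inter_add_ncard_diff_eq_ncard X B (hE.subset hA)
  have e7 : (B ∩ X).ncard + (B \ X).ncard = B.ncard :=
    Set.ncard_inter_add_ncard_diff_eq_ncard B X hBfin
  have e9 : (X ∩ B).ncard = (B ∩ X).ncard := by rw [inter_comm]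
  have hrkdual : rk M✶ X = (X \ B).ncard := by
    refine le_antisymm ?_ ?_
    · rw [rk_le_iff hEd]
      intro J hJ hJX
      rw [dual_indep_iff_exists'] at hJ
      obtain ⟨hJE, B₀, hB₀, hJB₀⟩ := hJ
      have hB₀fin : B₀.Finite := hE.subset hB₀.indep.subset_ground
      have f1 : J.ncard ≤ (X \ B₀).ncard :=
        Set.ncard_le_ncard (fun x hx => ⟨hJX hx, fun hxB => (hJB₀.ne_of_mem hx hxB) rfl⟩)
          ((hE.subset hA).diff : (X \ B₀).Finite)
      have f2 : (X ∩ B₀).ncard + (X \ B₀).ncard = X.ncard :=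
        Set.ncard_inter_add_ncard_diff_eq_ncard X B₀ (hE.subset hA)
      have f3 : (B₀ ∩ X).ncard + (B₀ \ X).ncard = B₀.ncard :=
        Set.ncard_inter_add_ncard_diff_eq_ncard B₀ X hB₀fin
      have f4 : (B₀ \ X).ncard ≤ I.ncard := by
        have h5 : (B₀ \ X).ncard ≤ rk M (M.E \ X) :=
          le_rk_of_indep hE (hB₀.indep.diff X)
            (fun x hx => ⟨hB₀.indep.subset_ground hx.1, hx.2⟩)
        rwa [rk_eq_ncard_basis' hE hI.isBasis'] at h5
      have f5 : B₀.ncard = B.ncard := hB₀.ncard_eq_ncard_of_isBase hB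
      have f6 : (X ∩ B₀).ncard = (B₀ ∩ X).ncard := by rw [inter_comm]
      omega
    · refine le_rk_of_indep hEd ?_ diff_subset
      rw [dual_indep_iff_exists']
      exact ⟨diff_subset.trans hA, B, hB, disjoint_sdiff_left⟩
  rw [hrkdual, rk_ground_eq_ncard_base hE hB, rk_eq_ncard_basis' hE hI.isBasis']
  omega

lemma contract_ground_eq {z : α} (hzE : z ∈ M.E) :
    (NDP.contract M {z}).E = M.E \ {z} := rfl

lemma rk_contract_add_one (hE : M.E.Finite) {z : α} (hz : M.Indep {z})
    {W : Set α} (hW : W ⊆ M.E \ {z}) :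
    rk (NDP.contract M {z}) W + 1 = rk M (W ∪ {z}) := by
  have hzE : z ∈ M.E := hz.subset_ground rfl
  set E' : Set α := M.E \ {z} with hE'
  set D : Matroid α := M✶ ↾ E' with hD
  have hDE : D.E = E' := rfl
  have hDfin : D.E.Finite := hE.subset diff_subset
  have hND : NDP.contract M {z} = D✶ := rfl
  -- dual formula for D
  have h1 : rk D✶ W + rk D D.E = W.ncard + rk D (D.E \ W) := rk_dual_add hDfin (by rwa [hDE])
  -- restriction transfers
  have h2 : rk D D.E = rk M✶ E' := by rw [hDE]; exact rk_restrict subset_rfl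
  have h3 : rk D (D.E \ W) = rk M✶ (E' \ W) := by rw [hDE]; exact rk_restrict diff_subset
  -- dual formula for M at E'
  have h4 : rk M✶ E' + rk M M.E = E'.ncard + rk M (M.E \ E') := rk_dual_add hE diff_subset
  have h5 : M.E \ E' = {z} := by
    rw [hE', diff_diff_right, diff_self, empty_union]
    exact inter_eq_self_of_subset_right (by simpa using hzE)
  have h6 : rk M {z} = 1 := rk_singleton_eq_one hE hz
  -- dual formula for M at E' \ W
  have h7 : rk M✶ (E' \ W) + rk M M.E = (E' \ W).ncard + rk M (M.E \ (E' \ W)) :=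
    rk_dual_add hE (diff_subset.trans diff_subset)
  have h8 : M.E \ (E' \ W) = W ∪ {z} := by
    ext x
    simp only [hE', mem_diff, mem_union, mem_singleton_iff]
    constructor
    · rintro ⟨hxE, hx⟩
      by_cases hxz : x = z
      · exact Or.inr hxz
      · exact Or.inl (by_contra fun hxW => hx ⟨⟨hxE, hxz⟩, hxW⟩)
    · rintro (hxW | rfl)
      · have hx' := hW hxW
        simp only [hE', mem_diff, mem_singleton_iff] at hx'
        exact ⟨hx'.1, fun h => h.2 hxW⟩
      · exact ⟨hzE, fun h => h.1.2 rfl⟩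
  have h9 : (E' \ W).ncard + W.ncard = E'.ncard :=
    Set.ncard_diff_add_ncard_of_subset hW (hE.subset diff_subset)
  rw [h2, h3] at h1
  rw [h5, h6] at h4
  rw [h8] at h7
  rw [hND]
  omega

/-! ### Existence of simplification representatives -/

/-- The parallel class of `e`: nonloops spanned by `e`. -/
def cls (N : Matroid α) (e : α) : Set α := {f | N.Indep {f} ∧ f ∈ N.closure {e}}

noncomputable def pick [Nonempty α] (N : Matroid α) (e : α) : α :=
  Classical.epsilon (fun f => f ∈ cls N e)

lemma pick_mem [Nonempty α] {N : Matroid α} {e : α} (h : (cls N e).Nonempty) :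
    pick N e ∈ cls N e :=
  Classical.epsilon_spec (p := fun f => f ∈ cls N e) h

lemma cls_self {N : Matroid α} {e : α} (he : e ∈ N.E) (hi : N.Indep {e}) : e ∈ cls N e :=
  ⟨hi, N.mem_closure_self e he⟩

lemma cls_eq_of_parallel {N : Matroid α} {e f : α} (he : N.Indep {e}) (hf : N.Indep {f})
    (hcl : f ∈ N.closure {e}) : cls N e = cls N f := by
  unfold cls
  rw [closure_singleton_eq_of_parallel he hf hcl]

lemma pick_congr [Nonempty α] {N : Matroid α} {e f : α} (h : cls N e = cls N f) :
    pick N e = pick N f := by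
  unfold pick
  rw [h]

lemma exists_simpRep [Nonempty α] (N : Matroid α) : ∃ S, SimpRep N S := by
  refine ⟨pick N '' {e | e ∈ N.E ∧ N.Indep {e}}, ?_, ?_, ?_, ?_⟩
  · rintro x ⟨e, ⟨heE, hei⟩, rfl⟩
    exact mem_ground_of_mem_closure (pick_mem ⟨e, cls_self heE hei⟩).2
  · rintro x ⟨e, ⟨heE, hei⟩, rfl⟩
    exact (pick_mem ⟨e, cls_self heE hei⟩).1
  · intro e heE hei
    exact ⟨pick N e, mem_image_of_mem _ ⟨heE, hei⟩, (pick_mem ⟨e, cls_self heE hei⟩).2⟩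
  · rintro x ⟨e₁, ⟨he₁E, he₁⟩, rfl⟩ y ⟨e₂, ⟨he₂E, he₂⟩, rfl⟩ hxy
    have h₁ := pick_mem ⟨e₁, cls_self he₁E he₁⟩
    have h₂ := pick_mem ⟨e₂, cls_self he₂E he₂⟩
    have c₁ : cls N e₁ = cls N (pick N e₁) := cls_eq_of_parallel he₁ h₁.1 h₁.2
    have c₂ : cls N e₂ = cls N (pick N e₂) := cls_eq_of_parallel he₂ h₂.1 h₂.2
    have c₃ : cls N (pick N e₂) = cls N (pick N e₁) := cls_eq_of_parallel h₂.1 h₁.1 hxy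
    exact pick_congr (c₁.trans (c₃.symm.trans c₂.symm))

end NDP18

open NDP NDP18 in
/-- A 3-connected matroid `M` has a vertical 3-separation
`(X, {z}, Y)` iff `si(M/z)` is not 3-connected. -/
theorem stmt18 (M : Matroid α) [M.Finite] (hM : NDP.ThreeConnected M)
    (z : α) (hz : z ∈ M.E) :
    (∃ X Y, NDP.VertThreeSep M X z Y) ↔
      ¬ NDP.SiThreeConnected (NDP.contract M {z}) := by
  classical
  have : Nonempty α := ⟨z⟩
  have hEfin : M.E.Finite := M.ground_finite
  set N := NDP.contract M {z} with hNdef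
  have hNE : N.E = M.E \ {z} := rfl
  have hNfin : N.E.Finite := hEfin.subset (hNE ▸ diff_subset)
  constructor
  · rintro ⟨X, Y, hV⟩
    obtain ⟨hUnion, hdisjXY, hzX, hzY, hsepXz, hrkXz, hrkY, hsepX, hrkX, hrkYz, hzclX, hzclY⟩ := hV
    have hXE : X ⊆ M.E := fun x hx => hUnion ▸ Or.inl (Or.inl hx)
    have hYE : Y ⊆ M.E := fun x hx => hUnion ▸ Or.inr hx
    have hXfin : X.Finite := hEfin.subset hXE
    have hYfin : Y.Finite := hEfin.subset hYE
    have hXE' : X ⊆ M.E \ {z} := fun x hx => ⟨hXE hx, fun h => hzX (h ▸ hx)⟩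
    have hYE' : Y ⊆ M.E \ {z} := fun x hx => ⟨hYE hx, fun h => hzY (h ▸ hx)⟩
    have hpart : ∀ x, x ∈ M.E ↔ (x ∈ X ∨ x = z ∨ x ∈ Y) := by
      intro x
      rw [← hUnion]
      simp only [mem_union, mem_singleton_iff]
      tauto
    have hEdiffX : M.E \ X = Y ∪ {z} := by
      ext x
      simp only [mem_diff, mem_union, mem_singleton_iff]
      constructor
      · rintro ⟨hxE, hxX⟩
        rcases (hpart x).1 hxE with h | h | h
        · exact absurd h hxX
        · exact Or.inr h
        · exact Or.inl h
      · rintro (h | rfl)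
        · exact ⟨hYE h, fun hx => (Set.disjoint_left.1 hdisjXY) hx h⟩
        · exact ⟨hz, hzX⟩
    obtain ⟨⟨hXsub, hlamX⟩, hcardX, hcardEX⟩ := hsepX
    -- z is not a loop
    have hzind : M.Indep {z} := by
      by_contra hzl
      have h0 : rk M {z} = 0 := rk_singleton_eq_zero hEfin hzl
      have hcl : z ∈ M.closure (M.E \ {z}) := M.closure_subset_closure hXE' hzclX
      have h2 : insert z (M.E \ {z}) = M.E := by
        rw [Set.insert_diff_singleton, Set.insert_eq_self.2 hz]
      have h1 : rk M (M.E \ {z}) = rk M M.E := by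
        rw [← rk_insert_of_mem_closure hEfin diff_subset hcl, h2]
      have hYcard : 3 ≤ Y.ncard := hrkY.trans (rk_le_ncard hEfin hYfin)
      refine hM 1 (by norm_num) {z} ⟨⟨singleton_subset_iff.2 hz, ?_⟩, ?_, ?_⟩
      · simp only [NDP.lam, h0, h1]
        omega
      · simp
      · calc (1 : ℕ) ≤ Y.ncard := by omega
          _ ≤ (M.E \ {z}).ncard := Set.ncard_le_ncard hYE' (hEfin.subset diff_subset)
    have hrkN : ∀ W ⊆ M.E \ {z}, rk N W + 1 = rk M (W ∪ {z}) := fun W hW =>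
      rk_contract_add_one hEfin hzind hW
    have hNX : rk N X + 1 = rk M X := by
      rw [hrkN X hXE', union_singleton, rk_insert_of_mem_closure hEfin hXE hzclX]
    have hNY : rk N Y + 1 = rk M Y := by
      rw [hrkN Y hYE', union_singleton, rk_insert_of_mem_closure hEfin hYE hzclY]
    have hNG : rk N N.E + 1 = rk M M.E := by
      rw [hNE, hrkN (M.E \ {z}) subset_rfl, diff_union_self, union_singleton,
        Set.insert_eq_self.2 hz]
    -- N is loopless
    have hloopless : ∀ y ∈ N.E, N.Indep {y} := by
      intro y hy
      by_contra hyl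
      rw [hNE] at hy
      have hyE : y ∈ M.E := hy.1
      have hyz : y ≠ z := by simpa using hy.2
      have h0 : rk N {y} = 0 := rk_singleton_eq_zero hNfin hyl
      have h1 : rk M {y, z} = 1 := by
        have := hrkN {y} (singleton_subset_iff.2 hy)
        rw [h0, Set.singleton_union] at this
        exact this.symm
      have hsub : {y, z} ⊆ M.E := by
        rintro x hx
        rcases hx with rfl | rfl
        · exact hyE
        · exact hz
      have hc2 : 2 ≤ (M.E \ {y, z}).ncard := by
        have hsub2 : X \ {y} ⊆ M.E \ {y, z} := by
          rintro x ⟨hxX, hxy⟩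
          refine ⟨hXE hxX, ?_⟩
          rintro (rfl | rfl)
          · exact hxy rfl
          · exact hzX hxX
        have h3 : X.ncard ≤ (X \ {y}).ncard + ({y} : Set α).ncard :=
          Set.ncard_le_ncard_diff_add_ncard X {y} (Set.finite_singleton y)
        rw [Set.ncard_singleton] at h3
        have h4 : (X \ {y}).ncard ≤ (M.E \ {y, z}).ncard :=
          Set.ncard_le_ncard hsub2 (hEfin.subset diff_subset)
        omega
      refine hM 2 (by norm_num) {y, z} ⟨⟨hsub, ?_⟩, ?_, hc2⟩
      · simp only [NDP.lam, h1]
        have := rk_mono (M := M) hEfin (diff_subset (s := M.E) (t := ({y, z} : Set α)))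
        omega
      · rw [Set.ncard_pair hyz]
    -- get a simplification representative set
    obtain ⟨S, hS⟩ := exists_simpRep N
    obtain ⟨hSE, hSind, hSrep, hSuniq⟩ := id hS
    intro hsi
    have h3con := hsi S hS
    have hSfin : S.Finite := hNfin.subset hSE
    set U : Set α := S ∩ N.closure X with hUdef
    have hXN : X ⊆ N.E := by rw [hNE]; exact hXE'
    have hYN : Y ⊆ N.E := by rw [hNE]; exact hYE'
    have hUS : U ⊆ S := inter_subset_left
    have hUclX : U ⊆ N.closure X := inter_subset_right
    have hVclY : S \ U ⊆ N.closure Y := by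
      rintro v ⟨hvS, hvU⟩
      have hvN : v ∈ N.E := hSE hvS
      have hvE : v ∈ M.E := (hNE ▸ hvN).1
      have hvz : v ≠ z := by
        have := (hNE ▸ hvN).2
        simpa using this
      rcases (hpart v).1 hvE with h | h | h
      · exact absurd ⟨hvS, N.subset_closure X hXN h⟩ hvU
      · exact absurd h hvz
      · exact N.subset_closure Y hYN h
    have hrkNU : rk N U ≤ rk N X := rk_le_of_subset_closure hNfin hUclX
    have hrkNV : rk N (S \ U) ≤ rk N Y := rk_le_of_subset_closure hNfin hVclY
    have hclS : N.E ⊆ N.closure S := by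
      intro e he
      obtain ⟨f, hfS, hfe⟩ := hSrep e he (hloopless e he)
      have he' : e ∈ N.closure {f} :=
        mem_closure_singleton_symm (hloopless e he) (hSind f hfS) hfe
      exact N.closure_subset_closure (singleton_subset_iff.2 hfS) he'
    have hrkNS : rk N S = rk N N.E :=
      le_antisymm (rk_mono hNfin hSE) (rk_le_of_subset_closure hNfin hclS)
    -- numeric facts
    have hab : rk M X + rk M Y ≤ rk M M.E + 2 := by
      have h1 : rk M (M.E \ X) = rk M Y := by
        rw [hEdiffX, union_singleton, rk_insert_of_mem_closure hEfin hYE hzclY]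
      simp only [NDP.lam, h1] at hlamX
      omega
    -- |U| ≥ 2
    have hUcard : 2 ≤ U.ncard := by
      obtain ⟨e, f, heX, hfX, hef, hpair⟩ :=
        exists_indep_pair_of_two_le_rk (M := N) hNfin (X := X) (by omega)
      have hei : N.Indep {e} := hpair.subset (by simp)
      have hfi : N.Indep {f} := hpair.subset (by simp)
      obtain ⟨p, hpS, hpe⟩ := hSrep e (hXN heX) hei
      obtain ⟨q, hqS, hqf⟩ := hSrep f (hXN hfX) hfi
      have hpU : p ∈ U := ⟨hpS, N.closure_subset_closure (singleton_subset_iff.2 heX) hpe⟩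
      have hqU : q ∈ U := ⟨hqS, N.closure_subset_closure (singleton_subset_iff.2 hfX) hqf⟩
      have hpq : p ≠ q := by
        rintro rfl
        have h1 : e ∈ N.closure {p} :=
          mem_closure_singleton_symm hei (hSind p hpS) hpe
        have h2 : N.closure {p} ⊆ N.closure {f} :=
          N.closure_subset_closure_of_subset_closure (singleton_subset_iff.2 hqf)
        have h3 : e ∈ N.closure {f} := h2 h1
        rw [Set.pair_comm] at hpair
        exact not_mem_closure_of_indep_pair hpair hef.symm h3
      have : ({p, q} : Set α).ncard ≤ U.ncard :=
        Set.ncard_le_ncard (by rw [Set.pair_subset_iff]; exact ⟨hpU, hqU⟩)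
          (hSfin.subset hUS)
      rw [Set.ncard_pair hpq] at this
      exact this
    have hlamNS : ∀ W ⊆ S, NDP.lam (N ↾ S) W = (rk N W : ℤ) + rk N (S \ W) - rk N S := by
      intro W hWS
      simp only [NDP.lam, restrict_ground_eq]
      rw [rk_restrict hWS, rk_restrict diff_subset, rk_restrict subset_rfl]
    -- case on |S \ U|
    rcases Nat.lt_or_ge (S \ U).ncard 2 with hVsmall | hVbig
    · rcases Nat.eq_zero_or_pos (S \ U).ncard with hV0 | hV1
      · -- S ⊆ closure X : contradiction with rk Y ≥ 3
        have hVempty : S \ U = ∅ :=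
          (Set.ncard_eq_zero (hSfin.diff : (S \ U).Finite)).1 hV0
        have hSU : S ⊆ U := by
          intro s hs
          by_contra hsU
          have hmem : s ∈ S \ U := ⟨hs, hsU⟩
          rw [hVempty] at hmem
          exact hmem
        have h1 : rk N N.E ≤ rk N X := by
          rw [← hrkNS]
          exact rk_le_of_subset_closure hNfin (fun s hs => hUclX (hSU hs))
        omega
      · -- |S \ U| = 1 : 1-separation of N ↾ S
        have hVone : (S \ U).ncard = 1 := by omega
        obtain ⟨v, hveq⟩ := (Set.ncard_eq_one).1 hVone
        have hvS : v ∈ S := by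
          have : v ∈ S \ U := by rw [hveq]; rfl
          exact this.1
        have hrkV1 : rk N (S \ U) = 1 := by
          rw [hveq]
          exact rk_singleton_eq_one hNfin (hSind v hvS)
        refine h3con 1 (by norm_num) U ⟨⟨?_, ?_⟩, ?_, ?_⟩
        · rw [restrict_ground_eq]; exact hUS
        · rw [hlamNS U hUS]
          have : rk M X + 3 ≤ rk M M.E + 2 := by omega
          omega
        · omega
        · rw [restrict_ground_eq]
          omega
    · -- |S \ U| ≥ 2 : 2-separation of N ↾ S
      refine h3con 2 (by norm_num) U ⟨⟨?_, ?_⟩, ?_, ?_⟩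
      · rw [restrict_ground_eq]; exact hUS
      · rw [hlamNS U hUS]
        omega
      · exact hUcard
      · rw [restrict_ground_eq]
        exact hVbig
  · intro hnsi
    unfold NDP.SiThreeConnected at hnsi
    push_neg at hnsi
    obtain ⟨S, hS, hnot3⟩ := hnsi
    obtain ⟨hSE, hSind, hSrep, hSuniq⟩ := hS
    unfold NDP.ThreeConnected at hnot3
    push_neg at hnot3
    obtain ⟨k, hk3, U, hUsep⟩ := hnot3
    obtain ⟨⟨hUS, hlamU⟩, hkU, hkV⟩ := hUsep
    rw [restrict_ground_eq] at hUS hkV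
    have hSfin : S.Finite := hNfin.subset hSE
    have hUfin : U.Finite := hSfin.subset hUS
    have hlamNS : NDP.lam (N ↾ S) U = (rk N U : ℤ) + rk N (S \ U) - rk N S := by
      simp only [NDP.lam, restrict_ground_eq]
      rw [rk_restrict hUS, rk_restrict diff_subset, rk_restrict subset_rfl]
    rw [hlamNS] at hlamU
    have hsubadd : rk N S ≤ rk N U + rk N (S \ U) := by
      have h := rk_subadd (M := N) hNfin U (S \ U)
      rwa [union_diff_cancel hUS] at h
    have hk1 : 1 ≤ k := by
      rcases Nat.eq_zero_or_pos k with rfl | h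
      · exfalso
        simp only [Nat.cast_zero] at hlamU
        omega
      · exact h
    have hUne : U.Nonempty := Set.nonempty_of_ncard_ne_zero (by omega)
    have hVne : (S \ U).Nonempty := Set.nonempty_of_ncard_ne_zero (by omega)
    obtain ⟨u, hu⟩ := hUne
    obtain ⟨v0, hv0⟩ := hVne
    have huS : u ∈ S := hUS hu
    have huN : u ∈ N.E := hSE huS
    have hv0S : v0 ∈ S := hv0.1
    have hv0N : v0 ∈ N.E := hSE hv0S
    have huz : u ≠ z := fun h => (hNE ▸ huN).2 (by simpa using h)
    have hv0z : v0 ≠ z := fun h => (hNE ▸ hv0N).2 (by simpa using h)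
    -- z is not a loop
    have hzind : M.Indep {z} := by
      by_contra hzl
      have hzcl : z ∈ M.closure ∅ := by
        by_contra hcl
        exact hzl ((indep_singleton_iff' M).2 ⟨hz, hcl⟩)
      have hcl : z ∈ M.closure (M.E \ {z}) :=
        M.closure_subset_closure (empty_subset _) hzcl
      have h2 : insert z (M.E \ {z}) = M.E := by
        rw [Set.insert_diff_singleton, Set.insert_eq_self.2 hz]
      have h1 : rk M (M.E \ {z}) = rk M M.E := by
        rw [← rk_insert_of_mem_closure hEfin diff_subset hcl, h2]
      have h0 : rk M {z} = 0 := rk_singleton_eq_zero hEfin hzl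
      refine hM 1 (by norm_num) {z} ⟨⟨singleton_subset_iff.2 hz, ?_⟩, by simp, ?_⟩
      · simp only [NDP.lam, h0, h1]
        omega
      · have hne : (M.E \ {z}).Nonempty := ⟨u, hNE ▸ huN⟩
        have := (Set.ncard_pos (hEfin.subset diff_subset)).2 hne
        omega
    have hrkN : ∀ W ⊆ M.E \ {z}, rk N W + 1 = rk M (W ∪ {z}) := fun W hW =>
      rk_contract_add_one hEfin hzind hW
    set X : Set α := {e | e ∈ N.E ∧ ∃ f ∈ U, f ∈ N.closure {e}} with hXdef
    set Y : Set α := N.E \ X with hYdef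
    have hXmem : ∀ x, x ∈ X ↔ (x ∈ N.E ∧ ∃ f ∈ U, f ∈ N.closure {x}) := by
      intro x
      rw [hXdef, mem_setOf_eq]
    have hYmem : ∀ x, x ∈ Y ↔ (x ∈ N.E ∧ x ∉ X) := by
      intro x
      rw [hYdef, mem_diff]
    have hXN : X ⊆ N.E := fun e he => ((hXmem e).1 he).1
    have hYN : Y ⊆ N.E := fun e he => ((hYmem e).1 he).1
    have hXE' : X ⊆ M.E \ {z} := fun e he => hNE ▸ hXN he
    have hYE' : Y ⊆ M.E \ {z} := fun e he => hNE ▸ hYN he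
    have hXME : X ⊆ M.E := fun e he => (hXE' he).1
    have hYME : Y ⊆ M.E := fun e he => (hYE' he).1
    have hzXn : z ∉ X := fun h => (hXE' h).2 rfl
    have hzYn : z ∉ Y := fun h => (hYE' h).2 rfl
    have hXfin : X.Finite := hEfin.subset hXME
    have hYfin : Y.Finite := hEfin.subset hYME
    have hUX : U ⊆ X := fun f hf =>
      (hXmem f).2 ⟨hSE (hUS hf), f, hf, N.mem_closure_self f (hSE (hUS hf))⟩
    have hVY : S \ U ⊆ Y := by
      rintro v ⟨hvS, hvU⟩
      refine (hYmem v).2 ⟨hSE hvS, fun hvX => ?_⟩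
      obtain ⟨-, f, hfU, hfcl⟩ := (hXmem v).1 hvX
      exact hvU ((hSuniq f (hUS hfU) v hvS hfcl) ▸ hfU)
    have hXnl : ∀ e ∈ X, N.Indep {e} := by
      intro e heX
      obtain ⟨heN, f, hfU, hfcl⟩ := (hXmem e).1 heX
      by_contra hel
      have hecl : e ∈ N.closure ∅ := by
        by_contra h
        exact hel ((indep_singleton_iff' N).2 ⟨heN, h⟩)
      have hce : N.closure {e} = N.closure ∅ := by
        rw [show ({e} : Set α) = insert e ∅ by simp]
        exact closure_insert_eq_of_mem_closure hecl
      rw [hce] at hfcl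
      exact ((indep_singleton_iff' N).1 (hSind f (hUS hfU))).2 hfcl
    have hXclU : X ⊆ N.closure U := by
      intro e heX
      obtain ⟨heN, f, hfU, hfcl⟩ := (hXmem e).1 heX
      have he' : e ∈ N.closure {f} :=
        mem_closure_singleton_symm (hXnl e heX) (hSind f (hUS hfU)) hfcl
      exact N.closure_subset_closure (singleton_subset_iff.2 hfU) he'
    have hYclV : Y ⊆ N.closure (S \ U) := by
      intro e heY
      obtain ⟨heN, heX⟩ := (hYmem e).1 heY
      by_cases hel : N.Indep {e}
      · obtain ⟨g, hgS, hgcl⟩ := hSrep e heN hel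
        have hgV : g ∈ S \ U := ⟨hgS, fun hgU => heX ((hXmem e).2 ⟨heN, g, hgU, hgcl⟩)⟩
        have he' : e ∈ N.closure {g} := mem_closure_singleton_symm hel (hSind g hgS) hgcl
        exact N.closure_subset_closure (singleton_subset_iff.2 hgV) he'
      · have hecl : e ∈ N.closure ∅ := by
          by_contra h
          exact hel ((indep_singleton_iff' N).2 ⟨heN, h⟩)
        exact N.closure_subset_closure (empty_subset _) hecl
    have hNXU : rk N X = rk N U :=
      le_antisymm (rk_le_of_subset_closure hNfin hXclU) (rk_mono hNfin hUX)
    have hNYV : rk N Y = rk N (S \ U) :=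
      le_antisymm (rk_le_of_subset_closure hNfin hYclV) (rk_mono hNfin hVY)
    have hclS : N.E ⊆ N.closure S := by
      intro e he
      by_cases heX : e ∈ X
      · exact N.closure_subset_closure hUS (hXclU heX)
      · exact N.closure_subset_closure diff_subset (hYclV ((hYmem e).2 ⟨he, heX⟩))
    have hNS : rk N S = rk N N.E :=
      le_antisymm (rk_mono hNfin hSE) (rk_le_of_subset_closure hNfin hclS)
    have hNXr : rk N X + 1 = rk M (X ∪ {z}) := hrkN X hXE'
    have hNYr : rk N Y + 1 = rk M (Y ∪ {z}) := hrkN Y hYE'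
    have hNG : rk N N.E + 1 = rk M M.E := by
      rw [hNE, hrkN (M.E \ {z}) subset_rfl, diff_union_self, union_singleton,
        Set.insert_eq_self.2 hz]
    have hmain : rk N U + rk N (S \ U) + 1 ≤ rk N S + k := by omega
    -- set identities
    have hEdX : M.E \ X = Y ∪ {z} := by
      ext x
      constructor
      · rintro ⟨hxE, hxX⟩
        by_cases hxz : x = z
        · exact Or.inr (by simpa using hxz)
        · exact Or.inl ((hYmem x).2 ⟨(by rw [hNE]; exact ⟨hxE, by simpa using hxz⟩), hxX⟩)
      · rintro (hxY | hxz)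
        · exact ⟨hYME hxY, ((hYmem x).1 hxY).2⟩
        · rw [mem_singleton_iff] at hxz
          subst hxz
          exact ⟨hz, hzXn⟩
    have hEdY : M.E \ Y = X ∪ {z} := by
      ext x
      constructor
      · rintro ⟨hxE, hxY⟩
        by_cases hxz : x = z
        · exact Or.inr (by simpa using hxz)
        · left
          have hxN : x ∈ N.E := by rw [hNE]; exact ⟨hxE, by simpa using hxz⟩
          by_contra hxX
          exact hxY ((hYmem x).2 ⟨hxN, hxX⟩)
      · rintro (hxX | hxz)
        · exact ⟨hXME hxX, fun h => ((hYmem x).1 h).2 hxX⟩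
        · rw [mem_singleton_iff] at hxz
          subst hxz
          exact ⟨hz, hzYn⟩
    have hEdXz : M.E \ (X ∪ {z}) = Y := by
      ext x
      constructor
      · rintro ⟨hxE, hxXz⟩
        have hxX : x ∉ X := fun h => hxXz (Or.inl h)
        have hxz : x ≠ z := fun h => hxXz (Or.inr (by simpa using h))
        exact (hYmem x).2 ⟨(by rw [hNE]; exact ⟨hxE, by simpa using hxz⟩), hxX⟩
      · intro hxY
        refine ⟨hYME hxY, ?_⟩
        rintro (h | h)
        · exact ((hYmem x).1 hxY).2 h
        · rw [mem_singleton_iff] at h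
          subst h
          exact hzYn hxY
    have hk12 : k = 1 ∨ k = 2 := by omega
    -- z is in the closure of X
    have hzclX : z ∈ M.closure X := by
      by_contra hncl
      have hXa : rk M (X ∪ {z}) = rk M X + 1 := by
        rw [union_singleton, rk_insert_of_not_mem_closure hEfin hXME hz hncl]
      have hlamX : NDP.lam M X ≤ (k : ℤ) - 1 := by
        simp only [NDP.lam, hEdX]
        omega
      rcases hk12 with rfl | rfl
      · refine hM 1 (by norm_num) X ⟨⟨hXME, hlamX⟩, ?_, ?_⟩
        · have := (Set.ncard_pos hXfin).2 ⟨u, hUX hu⟩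
          omega
        · have := (Set.ncard_pos (hEfin.subset diff_subset)).2 ⟨z, ⟨hz, hzXn⟩⟩
          omega
      · refine hM 2 (by norm_num) X ⟨⟨hXME, hlamX⟩, ?_, ?_⟩
        · exact le_trans hkU (Set.ncard_le_ncard hUX hXfin)
        · have hpair : ({v0, z} : Set α) ⊆ M.E \ X := by
            rintro x (rfl | rfl)
            · exact ⟨hYME (hVY hv0), ((hYmem x).1 (hVY hv0)).2⟩
            · exact ⟨hz, hzXn⟩
          have := Set.ncard_le_ncard hpair (hEfin.subset diff_subset)
          rwa [Set.ncard_pair hv0z] at this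
    -- z is in the closure of Y
    have hzclY : z ∈ M.closure Y := by
      by_contra hncl
      have hYb : rk M (Y ∪ {z}) = rk M Y + 1 := by
        rw [union_singleton, rk_insert_of_not_mem_closure hEfin hYME hz hncl]
      have hlamY : NDP.lam M Y ≤ (k : ℤ) - 1 := by
        simp only [NDP.lam, hEdY]
        omega
      rcases hk12 with rfl | rfl
      · refine hM 1 (by norm_num) Y ⟨⟨hYME, hlamY⟩, ?_, ?_⟩
        · have := (Set.ncard_pos hYfin).2 ⟨v0, hVY hv0⟩
          omega
        · have := (Set.ncard_pos (hEfin.subset diff_subset)).2 ⟨z, ⟨hz, hzYn⟩⟩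
          omega
      · refine hM 2 (by norm_num) Y ⟨⟨hYME, hlamY⟩, ?_, ?_⟩
        · exact le_trans hkV (Set.ncard_le_ncard hVY hYfin)
        · have hpair : ({u, z} : Set α) ⊆ M.E \ Y := by
            rintro x (rfl | rfl)
            · exact ⟨hXME (hUX hu), fun h => ((hYmem x).1 h).2 (hUX hu)⟩
            · exact ⟨hz, hzYn⟩
          have := Set.ncard_le_ncard hpair (hEfin.subset diff_subset)
          rwa [Set.ncard_pair huz] at this
    have hXa : rk M (X ∪ {z}) = rk M X := by
      rw [union_singleton, rk_insert_of_mem_closure hEfin hXME hzclX]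
    have hYb : rk M (Y ∪ {z}) = rk M Y := by
      rw [union_singleton, rk_insert_of_mem_closure hEfin hYME hzclY]
    -- both sides have rank at least 3
    have h3X : 3 ≤ rk M X := by
      by_contra h3
      push_neg at h3
      rcases hk12 with rfl | rfl
      · have h1 : 1 ≤ rk N U := by
          simpa using le_rk_of_indep hNfin (hSind u huS) (singleton_subset_iff.2 hu)
        by_cases hX2 : 2 ≤ X.ncard
        · have hlam2 : NDP.lam M X ≤ (2 : ℤ) - 1 := by
            simp only [NDP.lam, hEdX]
            omega
          refine hM 2 (by norm_num) X ⟨⟨hXME, hlam2⟩, hX2, ?_⟩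
          have hpair : ({v0, z} : Set α) ⊆ M.E \ X := by
            rintro x (rfl | rfl)
            · exact ⟨hYME (hVY hv0), ((hYmem x).1 (hVY hv0)).2⟩
            · exact ⟨hz, hzXn⟩
          have := Set.ncard_le_ncard hpair (hEfin.subset diff_subset)
          rwa [Set.ncard_pair hv0z] at this
        · have := rk_le_ncard (M := M) (X := X) hEfin hXfin
          omega
      · obtain ⟨u₁, u₂, hu₁, hu₂, hne⟩ := (Set.one_lt_ncard_iff hUfin).1 (by omega)
        have hip : N.Indep {u₁, u₂} := by
          by_contra hdep
          have hcl2 := mem_closure_of_dep_pair (hSE (hUS hu₂)) (hSind u₁ (hUS hu₁)) hdep hne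
          exact hne ((hSuniq u₂ (hUS hu₂) u₁ (hUS hu₁) hcl2).symm)
        have h2 : 2 ≤ rk N U := by
          have := le_rk_of_indep hNfin hip (by rw [Set.pair_subset_iff]; exact ⟨hu₁, hu₂⟩)
          rwa [Set.ncard_pair hne] at this
        omega
    have h3Y : 3 ≤ rk M Y := by
      by_contra h3
      push_neg at h3
      rcases hk12 with rfl | rfl
      · have h1 : 1 ≤ rk N (S \ U) := by
          simpa using le_rk_of_indep hNfin (hSind v0 hv0S) (singleton_subset_iff.2 hv0)
        by_cases hY2 : 2 ≤ Y.ncard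
        · have hlam2 : NDP.lam M Y ≤ (2 : ℤ) - 1 := by
            simp only [NDP.lam, hEdY]
            omega
          refine hM 2 (by norm_num) Y ⟨⟨hYME, hlam2⟩, hY2, ?_⟩
          have hpair : ({u, z} : Set α) ⊆ M.E \ Y := by
            rintro x (rfl | rfl)
            · exact ⟨hXME (hUX hu), fun h => ((hYmem x).1 h).2 (hUX hu)⟩
            · exact ⟨hz, hzYn⟩
          have := Set.ncard_le_ncard hpair (hEfin.subset diff_subset)
          rwa [Set.ncard_pair huz] at this
        · have := rk_le_ncard (M := M) (X := Y) hEfin hYfin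
          omega
      · obtain ⟨v₁, v₂, hv₁, hv₂, hne⟩ :=
          (Set.one_lt_ncard_iff (hSfin.diff : (S \ U).Finite)).1 (by omega)
        have hip : N.Indep {v₁, v₂} := by
          by_contra hdep
          have hcl2 := mem_closure_of_dep_pair (hSE hv₂.1) (hSind v₁ hv₁.1) hdep hne
          exact hne ((hSuniq v₂ hv₂.1 v₁ hv₁.1 hcl2).symm)
        have h2 : 2 ≤ rk N (S \ U) := by
          have := le_rk_of_indep hNfin hip (by rw [Set.pair_subset_iff]; exact ⟨hv₁, hv₂⟩)
          rwa [Set.ncard_pair hne] at this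
        omega
    have h3Xc : 3 ≤ X.ncard := le_trans h3X (rk_le_ncard hEfin hXfin)
    have h3Yc : 3 ≤ Y.ncard := le_trans h3Y (rk_le_ncard hEfin hYfin)
    -- assemble the vertical 3-separation
    refine ⟨X, Y, ?_, ?_, hzXn, hzYn, ⟨⟨?_, ?_⟩, ?_, ?_⟩, ?_, h3Y, ⟨⟨hXME, ?_⟩, h3Xc, ?_⟩, h3X, ?_, hzclX, hzclY⟩
    · ext x
      simp only [mem_union, mem_singleton_iff]
      constructor
      · rintro ((hx | rfl) | hx)
        · exact hXME hx
        · exact hz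
        · exact hYME hx
      · intro hxE
        by_cases hxz : x = z
        · exact Or.inl (Or.inr hxz)
        · by_cases hxX : x ∈ X
          · exact Or.inl (Or.inl hxX)
          · exact Or.inr ((hYmem x).2 ⟨(by rw [hNE]; exact ⟨hxE, by simpa using hxz⟩), hxX⟩)
    · rw [hYdef]
      exact disjoint_sdiff_right
    · exact union_subset hXME (by simpa using hz)
    · -- lam M (X ∪ {z}) ≤ 2
      simp only [NDP.lam, hEdXz, hXa]
      omega
    · -- 3 ≤ |X ∪ {z}|
      refine le_trans h3Xc (Set.ncard_le_ncard subset_union_left ?_)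
      exact hXfin.union (Set.finite_singleton z)
    · rw [hEdXz]
      exact h3Yc
    · rw [hXa]
      exact h3X
    · -- lam M X ≤ 2
      simp only [NDP.lam, hEdX, hYb]
      omega
    · rw [hEdX]
      refine le_trans h3Yc (Set.ncard_le_ncard subset_union_left ?_)
      exact hYfin.union (Set.finite_singleton z)
    · rw [hYb]
      exact h3Y
end
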